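/- arXiv:1705.01380 — 6 statements merged into one kernel-verified Lean document; each statement's English description precedes it below -/
import Mathlib

section
/- Let p be an odd prime and w a positive integer. For every integer u ≥ 0: (i) if gcd(u,p) = 1, then q_{p,w}(u) ≡ −u^w · w · q_p(u) (mod p); (ii) if p | u and w ≥ 2, then q_{p,w}(u) ≡ 0 (mod p); (iii) if w = 1 and u ≡ kp (mod p²) for an integer k, then q_{p,1}(u) ≡ k (mod p). -/
open Finset

noncomputable section

/-- The Fermat quotient `q_p(u)`: for `gcd(u,p)=1` the unique integer in `[0,p-1]`
congruent to `(u^(p-1)-1)/p` mod `p`, and `0` when `p ∣ u`. -/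
def fermatQuot (p u : ℕ) : ℕ :=
  if p ∣ u then 0 else ((u ^ (p - 1) - 1) / p) % p

/-- The polynomial quotient `q_{p,w}(u)`: the unique integer in `[0,p-1]`
congruent to `(u^w - u^(w*p))/p` mod `p`. -/
def polyQuot (p w u : ℕ) : ℤ :=
  (((u : ℤ) ^ w - (u : ℤ) ^ (w * p)) / (p : ℤ)) % (p : ℤ)

/-- The binary sequence `(f_u)`: `f_u = 0` iff the Legendre symbol of `q_{p,w}(u)`
is `1` or `q_{p,w}(u) = 0`. -/
def legSeq (p : ℕ) [Fact p.Prime] (w : ℕ) (u : ℕ) : ZMod 2 :=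
  if legendreSym p (polyQuot p w u) = 1 ∨ polyQuot p w u = 0 then 0 else 1

/-- The linear complexity of a binary sequence: the least order `L` of a linear
recurrence `s_{u+L} = c_{L-1} s_{u+L-1} + ⋯ + c_0 s_u` with `c_0 = 1` satisfied by `s`. -/
def linearComplexity (s : ℕ → ZMod 2) : ℕ :=
  sInf {L : ℕ | ∃ c : Fin L → ZMod 2,
    (∀ h : 0 < L, c ⟨0, h⟩ = 1) ∧
    ∀ u : ℕ, s (u + L) = ∑ i : Fin L, c i * s (u + (i : ℕ))}

/-- The map `H_w : u ↦ -w q_p(u) mod p` for `gcd(u,p)=1`, `0` if `p ∣ u` and `w ≥ 2`,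
and `k mod p` if `u ≡ kp (mod p²)` and `w = 1`. -/
def Hquot (p w u : ℕ) : ZMod p :=
  if p ∣ u then (if w = 1 then ((u / p : ℕ) : ZMod p) else 0)
  else -(w : ZMod p) * ((fermatQuot p u : ℕ) : ZMod p)

/-- `D_l = {u : 0 ≤ u < p², gcd(u,p) = 1, H_w(u) ≡ l (mod p)}`. -/
def Dset (p w : ℕ) (l : ZMod p) : Finset ℕ :=
  (Finset.range (p ^ 2)).filter fun u => Nat.Coprime u p ∧ Hquot p w u = l

/-- `Q_l = {u ∈ D_l : (u/p) = 1}`. -/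
def Qset (p : ℕ) [Fact p.Prime] (w : ℕ) (l : ZMod p) : Finset ℕ :=
  (Dset p w l).filter fun u => legendreSym p u = 1

/-- `N_l = {u ∈ D_l : (u/p) = -1}`. -/
def Nset (p : ℕ) [Fact p.Prime] (w : ℕ) (l : ZMod p) : Finset ℕ :=
  (Dset p w l).filter fun u => legendreSym p u = -1

/-- The quadratic residues modulo `p` in `{1,…,p-1}`. -/
def QRes (p : ℕ) [Fact p.Prime] : Finset ℕ :=
  (Finset.Ico 1 p).filter fun l => legendreSym p l = 1

/-- The quadratic non-residues modulo `p` in `{1,…,p-1}`. -/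
def QNR (p : ℕ) [Fact p.Prime] : Finset ℕ :=
  (Finset.Ico 1 p).filter fun l => legendreSym p l = -1

/-- Evaluation of `G^odd(x) = Σ_{l∈N} D_l(x) + Σ_{l=1}^{p-1} N_l(x)` at a point of the
algebraic closure of `F_2`. -/
def GoddEval (p : ℕ) [Fact p.Prime] (w : ℕ) (x : AlgebraicClosure (ZMod 2)) :
    AlgebraicClosure (ZMod 2) :=
  (∑ l ∈ QNR p, ∑ u ∈ Dset p w (l : ZMod p), x ^ u)
    + ∑ l ∈ Finset.Ico 1 p, ∑ u ∈ Nset p w (l : ZMod p), x ^ u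

/-- Evaluation of `G^one(x) = Σ_{l∈N} D_l(x) + Σ_{l=1}^{p-1} N_l(x) + Σ_{l∈N} x^{lp}`. -/
def GoneEval (p : ℕ) [Fact p.Prime] (w : ℕ) (x : AlgebraicClosure (ZMod 2)) :
    AlgebraicClosure (ZMod 2) :=
  GoddEval p w x + ∑ l ∈ QNR p, x ^ (l * p)

lemma div_emod_modEq_of_modEq (p : ℕ) (hp0 : (p : ℤ) ≠ 0) (a c : ℤ)
    (h : a ≡ c * p [ZMOD (p : ℤ) ^ 2]) : (a / p) % p ≡ c [ZMOD (p : ℤ)] := by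
  obtain ⟨t, ht⟩ := (h.symm).dvd
  have ha : a = (p : ℤ) * (c + p * t) := by rw [sq] at ht; linarith
  rw [ha, Int.mul_ediv_cancel_left _ hp0]
  show (c + (p : ℤ) * t) % p % p = c % p
  rw [Int.add_mul_emod_self_left, Int.emod_emod_of_dvd _ dvd_rfl]

lemma one_add_pow_modEq (x : ℤ) (n : ℕ) : (1 + x) ^ n ≡ 1 + n * x [ZMOD x ^ 2] := by
  induction n with
  | zero => simp
  | succ n ih =>
    calc (1 + x) ^ (n + 1) = (1 + x) ^ n * (1 + x) := pow_succ _ _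
      _ ≡ (1 + n * x) * (1 + x) [ZMOD x ^ 2] := ih.mul_right _
      _ = 1 + (↑(n + 1)) * x + n * x ^ 2 := by push_cast; ring
      _ ≡ 1 + (↑(n + 1)) * x + n * 0 [ZMOD x ^ 2] :=
        (Int.ModEq.refl _).add ((Int.ModEq.refl (n : ℤ)).mul
          (Int.modEq_zero_iff_dvd.mpr dvd_rfl))
      _ = 1 + (↑(n + 1)) * x := by ring

/-- Relation between the polynomial quotient and the Fermat quotient. -/
theorem polyQuot_eq_cases (p : ℕ) [hp : Fact p.Prime] (hodd : p ≠ 2)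
    (w : ℕ) (hw : 0 < w) (u : ℕ) :
    (Nat.Coprime u p →
      polyQuot p w u ≡ -(u : ℤ) ^ w * (w : ℤ) * (fermatQuot p u : ℤ) [ZMOD (p : ℤ)]) ∧
    (p ∣ u → 2 ≤ w → polyQuot p w u ≡ 0 [ZMOD (p : ℤ)]) ∧
    (w = 1 → ∀ k : ℤ, (u : ℤ) ≡ k * p [ZMOD ((p : ℤ) ^ 2)] →
      polyQuot p 1 u ≡ k [ZMOD (p : ℤ)]) := by
  have hp1 : 1 < p := hp.out.one_lt
  have hp0 : (p : ℤ) ≠ 0 := by positivity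
  refine ⟨?_, ?_, ?_⟩
  · -- coprime case
    intro hco
    have hpu : ¬ p ∣ u := fun h => by
      have : p ∣ Nat.gcd u p := Nat.dvd_gcd h dvd_rfl
      rw [hco] at this
      have := Nat.le_of_dvd one_pos this
      omega
    have hune : (u : ZMod p) ≠ 0 := by
      rw [Ne, ZMod.natCast_eq_zero_iff]
      exact hpu
    have hu1 : 1 ≤ u := Nat.one_le_iff_ne_zero.mpr (fun h => hpu (h ▸ dvd_zero p))
    have h1le : 1 ≤ u ^ (p - 1) := Nat.one_le_pow _ _ hu1
    have hm : u ^ (p - 1) ≡ 1 [MOD p] := by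
      have := ZMod.pow_card_sub_one_eq_one hune
      have h2 : ((u ^ (p - 1) : ℕ) : ZMod p) = ((1 : ℕ) : ZMod p) := by push_cast; simpa
      exact (ZMod.natCast_eq_natCast_iff _ _ _).mp h2
    have hdvd : p ∣ u ^ (p - 1) - 1 := (Nat.modEq_iff_dvd' h1le).mp hm.symm
    have hdvdZ : (p : ℤ) ∣ (u : ℤ) ^ (p - 1) - 1 := by
      have := Int.natCast_dvd_natCast.mpr hdvd
      push_cast [Nat.cast_sub h1le] at this
      exact_mod_cast this
    obtain ⟨t, ht⟩ := hdvdZ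
    -- fermatQuot cast
    have hQ : (fermatQuot p u : ℤ) ≡ t [ZMOD (p : ℤ)] := by
      have hfq : fermatQuot p u = ((u ^ (p - 1) - 1) / p) % p := by
        simp [fermatQuot, hpu]
      have hcast : ((fermatQuot p u : ℕ) : ℤ) = (((u : ℤ) ^ (p - 1) - 1) / p) % p := by
        rw [hfq]
        push_cast [Int.natCast_ediv, Nat.cast_sub h1le]
        ring_nf
      rw [hcast, ht, Int.mul_ediv_cancel_left _ hp0]
      show (t % p) % p = t % p
      rw [Int.emod_emod_of_dvd _ dvd_rfl]
    -- main congruence mod p^2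
    have hpow : (u : ℤ) ^ (p - 1) = 1 + p * t := by linarith
    have hexp : (u : ℤ) ^ (w * p) = (u : ℤ) ^ w * (1 + (p : ℤ) * t) ^ w := by
      rw [← hpow, ← mul_pow, ← pow_succ']
      rw [← pow_mul]
      congr 1
      rw [mul_comm]
      congr 1
      omega
    have hbin : (1 + (p : ℤ) * t) ^ w ≡ 1 + w * ((p : ℤ) * t) [ZMOD (p : ℤ) ^ 2] := by
      refine (one_add_pow_modEq ((p : ℤ) * t) w).of_dvd ?_
      rw [mul_pow]
      exact Dvd.intro _ rfl
    have hmain : (u : ℤ) ^ w - (u : ℤ) ^ (w * p) ≡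
        (-(u : ℤ) ^ w * w * t) * p [ZMOD (p : ℤ) ^ 2] := by
      rw [hexp]
      calc (u : ℤ) ^ w - (u : ℤ) ^ w * (1 + (p : ℤ) * t) ^ w
          ≡ (u : ℤ) ^ w - (u : ℤ) ^ w * (1 + w * ((p : ℤ) * t)) [ZMOD (p : ℤ) ^ 2] :=
            (Int.ModEq.refl _).sub (hbin.mul_left _)
        _ = (-(u : ℤ) ^ w * w * t) * p := by ring
    have hQt : (-(u : ℤ) ^ w * w * t) * p ≡
        (-(u : ℤ) ^ w * w * (fermatQuot p u : ℤ)) * p [ZMOD (p : ℤ) ^ 2] := by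
      have h1 : (-(u : ℤ) ^ w * w * t) ≡ (-(u : ℤ) ^ w * w * (fermatQuot p u : ℤ))
          [ZMOD (p : ℤ)] := (hQ.symm).mul_left _
      have := h1.mul_right' (c := (p : ℤ))
      rwa [sq]
    exact div_emod_modEq_of_modEq p hp0 _ _ (hmain.trans hQt)
  · -- p ∣ u, w ≥ 2
    intro hdvd hw2
    have hz : (p : ℤ) ∣ (u : ℤ) := Int.natCast_dvd_natCast.mpr hdvd
    have hd1 : (p : ℤ) ^ 2 ∣ (u : ℤ) ^ w :=
      dvd_trans (pow_dvd_pow _ hw2) (pow_dvd_pow_of_dvd hz w)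
    have hd2 : (p : ℤ) ^ 2 ∣ (u : ℤ) ^ (w * p) :=
      dvd_trans (pow_dvd_pow _ (by nlinarith : 2 ≤ w * p)) (pow_dvd_pow_of_dvd hz _)
    have h : (u : ℤ) ^ w - (u : ℤ) ^ (w * p) ≡ 0 * p [ZMOD (p : ℤ) ^ 2] := by
      rw [zero_mul]
      exact Int.modEq_zero_iff_dvd.mpr (dvd_sub hd1 hd2)
    simpa [polyQuot] using div_emod_modEq_of_modEq p hp0 _ _ h
  · -- w = 1
    intro _ k hk
    have h2 : (u : ℤ) ≡ k * p [ZMOD (p : ℤ)] := hk.of_dvd (dvd_pow_self _ two_ne_zero)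
    have hz : (p : ℤ) ∣ (u : ℤ) := by
      obtain ⟨s, hs⟩ := h2.dvd
      exact ⟨k - s, by linarith⟩
    have hup : (p : ℤ) ^ 2 ∣ (u : ℤ) ^ p :=
      dvd_trans (pow_dvd_pow _ hp1) (pow_dvd_pow_of_dvd hz p)
    have hmain : (u : ℤ) ^ 1 - (u : ℤ) ^ (1 * p) ≡ k * p [ZMOD (p : ℤ) ^ 2] := by
      have h0 : (u : ℤ) ^ (1 * p) ≡ 0 [ZMOD (p : ℤ) ^ 2] := by
        rw [one_mul]
        exact Int.modEq_zero_iff_dvd.mpr hup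
      have h1 : (u : ℤ) ^ 1 ≡ k * p [ZMOD (p : ℤ) ^ 2] := by
        rw [pow_one]; exact hk
      calc (u : ℤ) ^ 1 - (u : ℤ) ^ (1 * p) ≡ k * p - 0 [ZMOD (p : ℤ) ^ 2] := h1.sub h0
        _ = k * p := by ring
    exact div_emod_modEq_of_modEq p hp0 _ _ hmain
end
end

section
/- Let p be an odd prime, w₁ an integer with 1 ≤ w₁ ≤ p−1, and w₂ ≥ 0 an integer. Then for every integer u with gcd(u,p) = 1, one has q_{p, w₁ + w₂(p−1)}(u) ≡ −u^{w₁}(w₁ − w₂) q_p(u) ≡ w₁^{−1}(w₁ − w₂) q_{p,w₁}(u) (mod p), where w₁^{−1} denotes the inverse of w₁ modulo p. -/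
open Finset

noncomputable section

private lemma sq_dvd_aux (x : ℤ) (n : ℕ) : x ^ 2 ∣ (1 + x) ^ n - (1 + n * x) := by
  induction n with
  | zero => simp
  | succ n ih =>
    have h : (1 + x) ^ (n + 1) - (1 + (n + 1 : ℕ) * x)
        = (1 + x) * ((1 + x) ^ n - (1 + n * x)) + n * x ^ 2 := by push_cast; ring
    rw [h]
    exact dvd_add (ih.mul_left _) (dvd_mul_left _ _)

private lemma polyQuot_cast (p : ℕ) [hp : Fact p.Prime] (w u : ℕ) (hu : ¬ p ∣ u) :
    (polyQuot p w u : ZMod p)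
      = -(u : ZMod p) ^ w * (w : ZMod p) * (fermatQuot p u : ZMod p) := by
  have hp0 : (p : ℤ) ≠ 0 := by exact_mod_cast hp.out.ne_zero
  have hu' : (u : ZMod p) ≠ 0 := by
    rwa [Ne, ZMod.natCast_eq_zero_iff]
  have hf : (u : ZMod p) ^ (p - 1) = 1 := ZMod.pow_card_sub_one_eq_one hu'
  have h1 : (p : ℤ) ∣ (u : ℤ) ^ (p - 1) - 1 := by
    rw [← ZMod.intCast_zmod_eq_zero_iff_dvd]
    push_cast
    rw [hf, sub_self]
  set Q : ℤ := ((u : ℤ) ^ (p - 1) - 1) / p with hQdef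
  have hQ : (p : ℤ) * Q = (u : ℤ) ^ (p - 1) - 1 := Int.mul_ediv_cancel' h1
  have hu0 : 1 ≤ u := Nat.one_le_iff_ne_zero.mpr (by rintro rfl; exact hu (dvd_zero p))
  have hupow : 1 ≤ u ^ (p - 1) := Nat.one_le_pow _ _ hu0
  -- fermatQuot cast
  have hdn : p ∣ u ^ (p - 1) - 1 := by
    rw [← Int.natCast_dvd_natCast, Nat.cast_sub hupow, Nat.cast_pow, Nat.cast_one]
    exact h1
  have hFQ : (fermatQuot p u : ZMod p) = ((Q : ℤ) : ZMod p) := by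
    rw [fermatQuot, if_neg hu, ZMod.natCast_mod]
    have hthis : ((((u ^ (p - 1) - 1) / p : ℕ) : ℤ)) = Q := by
      apply mul_left_cancel₀ hp0
      rw [hQ]
      have : (p : ℤ) * (((u ^ (p - 1) - 1) / p : ℕ) : ℤ)
          = ((p * ((u ^ (p - 1) - 1) / p) : ℕ) : ℤ) := by push_cast; ring
      rw [this, Nat.mul_div_cancel' hdn, Nat.cast_sub hupow, Nat.cast_pow, Nat.cast_one]
    rw [← hthis, Int.cast_natCast]
  have hwp : w * p = w + w * (p - 1) := by
    conv_lhs => rw [← Nat.sub_add_cancel hp.out.one_le]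
    ring
  have hpow : (u : ℤ) ^ (w * p) = (u : ℤ) ^ w * (1 + (p : ℤ) * Q) ^ w := by
    rw [hwp, pow_add, mul_comm w (p-1), pow_mul]
    congr 1
    rw [hQ]; ring_nf
  obtain ⟨c, hc⟩ := sq_dvd_aux ((p : ℤ) * Q) w
  have hdvd : ((u : ℤ) ^ w - (u : ℤ) ^ (w * p))
      = (p : ℤ) * (-(u : ℤ) ^ w * w * Q + (p : ℤ) * (-(u : ℤ) ^ w * Q ^ 2 * c)) := by
    rw [hpow]
    linear_combination (-(u : ℤ) ^ w) * hc
  have hdivT : ((u : ℤ) ^ w - (u : ℤ) ^ (w * p)) / (p : ℤ)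
      = -(u : ℤ) ^ w * w * Q + (p : ℤ) * (-(u : ℤ) ^ w * Q ^ 2 * c) := by
    rw [hdvd, Int.mul_ediv_cancel_left _ hp0]
  rw [polyQuot, ZMod.intCast_mod, hdivT, hFQ]
  push_cast
  rw [ZMod.natCast_self]
  ring

/-- Reduction of `q_{p,w}` for `w = w₁ + w₂(p-1)` to the case `w₁ ≤ p-1`. -/
theorem polyQuot_reduction (p : ℕ) [hp : Fact p.Prime] (hodd : p ≠ 2)
    (w₁ w₂ : ℕ) (hw₁ : 1 ≤ w₁) (hw₁' : w₁ ≤ p - 1)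
    (u : ℕ) (hu : Nat.Coprime u p) :
    ((polyQuot p (w₁ + w₂ * (p - 1)) u : ZMod p)
        = -(u : ZMod p) ^ w₁ * ((w₁ : ZMod p) - (w₂ : ZMod p)) * (fermatQuot p u : ZMod p)) ∧
    ((polyQuot p (w₁ + w₂ * (p - 1)) u : ZMod p)
        = (w₁ : ZMod p)⁻¹ * ((w₁ : ZMod p) - (w₂ : ZMod p)) * (polyQuot p w₁ u : ZMod p)) := by
  have hpd : ¬ p ∣ u := (hp.out.coprime_iff_not_dvd).mp hu.symm
  have hu' : (u : ZMod p) ≠ 0 := by rwa [Ne, ZMod.natCast_eq_zero_iff]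
  have hf : (u : ZMod p) ^ (p - 1) = 1 := ZMod.pow_card_sub_one_eq_one hu'
  have h1 := polyQuot_cast p (w₁ + w₂ * (p - 1)) u hpd
  have h2 := polyQuot_cast p w₁ u hpd
  have hA : (u : ZMod p) ^ (w₁ + w₂ * (p - 1)) = (u : ZMod p) ^ w₁ := by
    rw [pow_add, mul_comm w₂ (p - 1), pow_mul, hf, one_pow, mul_one]
  have hcast : ((w₁ + w₂ * (p - 1) : ℕ) : ZMod p) = (w₁ : ZMod p) - w₂ := by
    push_cast [Nat.cast_sub hp.out.one_le, ZMod.natCast_self]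
    ring
  have hw1ne : (w₁ : ZMod p) ≠ 0 := by
    rw [Ne, ZMod.natCast_eq_zero_iff]
    intro h
    have := Nat.le_of_dvd hw₁ h
    have := hp.out.pos
    omega
  have hfirst : (polyQuot p (w₁ + w₂ * (p - 1)) u : ZMod p)
      = -(u : ZMod p) ^ w₁ * ((w₁ : ZMod p) - (w₂ : ZMod p)) * (fermatQuot p u : ZMod p) := by
    rw [h1, hA, hcast]
  refine ⟨hfirst, ?_⟩
  rw [hfirst, h2]
  field_simp
end
end

section
/- Let p be an odd prime and w an integer with 1 ≤ w ≤ p−1. If a ∈ Q_{l'} for some l' ∈ {0,...,p−1}, then aQ_l = Q_{(l+l') mod p} and aN_l = N_{(l+l') mod p} for every l ∈ {0,...,p−1}, where aS = {ab mod p² : b ∈ S}. -/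
open Finset

noncomputable section

lemma fermat_dvd (p : ℕ) [hp : Fact p.Prime] {u : ℕ} (hu : ¬ p ∣ u) : p ∣ u ^ (p-1) - 1 := by
  have h : (u : ZMod p) ≠ 0 := by
    rwa [Ne, ZMod.natCast_eq_zero_iff]
  have h1 := ZMod.pow_card_sub_one_eq_one h
  have hu1 : 1 ≤ u ^ (p-1) := Nat.one_le_iff_ne_zero.2 (pow_ne_zero _ (by rintro rfl; exact hu ⟨0, rfl⟩))
  rw [← ZMod.natCast_eq_zero_iff]
  push_cast [hu1]
  rw [h1]; ring

lemma pmul_fq (p : ℕ) [hp : Fact p.Prime] {u : ℕ} (hu : ¬ p ∣ u) :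
    (p : ℤ) * ((u ^ (p-1) - 1) / p : ℕ) = (u:ℤ)^(p-1) - 1 := by
  have hu1 : 1 ≤ u ^ (p-1) := Nat.one_le_iff_ne_zero.2 (pow_ne_zero _ (by rintro rfl; exact hu ⟨0, rfl⟩))
  have := Nat.div_mul_cancel (fermat_dvd p hu)
  calc (p : ℤ) * ((u ^ (p-1) - 1) / p : ℕ) = (((u ^ (p-1) - 1) / p * p : ℕ) : ℤ) := by push_cast; ring
  _ = ((u ^ (p-1) - 1 : ℕ) : ℤ) := by rw [this]
  _ = (u:ℤ)^(p-1) - 1 := by push_cast [hu1]; ring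

lemma fq_cast (p : ℕ) [hp : Fact p.Prime] {u : ℕ} (hu : ¬ p ∣ u) :
    (fermatQuot p u : ZMod p) = (((u ^ (p-1) - 1) / p : ℕ) : ZMod p) := by
  rw [fermatQuot, if_neg hu, ZMod.natCast_mod]

lemma Hquot_mul (p : ℕ) [hp : Fact p.Prime] {w a b : ℕ} (ha : ¬ p ∣ a) (hb : ¬ p ∣ b) :
    Hquot p w (a * b % p ^ 2) = Hquot p w a + Hquot p w b := by
  set c := a * b % p ^ 2 with hc
  have hcab : c % p = a * b % p := by
    rw [hc, Nat.mod_mod_of_dvd _ (dvd_pow_self p two_ne_zero)]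
  have hcd : ¬ p ∣ c := by
    rw [Nat.dvd_iff_mod_eq_zero, hcab, ← Nat.dvd_iff_mod_eq_zero]
    exact fun h => (hp.out.dvd_mul.mp h).elim ha hb
  set A := (a ^ (p-1) - 1) / p with hA
  set B := (b ^ (p-1) - 1) / p with hB
  set C := (c ^ (p-1) - 1) / p with hC
  have key : (C : ZMod p) = (A : ZMod p) + (B : ZMod p) := by
    have hA' := pmul_fq p ha
    have hB' := pmul_fq p hb
    have hC' := pmul_fq p hcd
    have hmod : (c : ℤ) ≡ ((a:ℤ)*(b:ℤ)) [ZMOD ((p:ℤ))^2] := by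
      have h1 : (c : ℤ) = ((a:ℤ)*(b:ℤ)) % ((p:ℤ))^2 := by rw [hc]; push_cast; ring_nf
      rw [h1]; exact Int.emod_emod_of_dvd _ dvd_rfl
    have hpow := hmod.pow (p-1)
    obtain ⟨k, hk⟩ : ((p:ℤ))^2 ∣ (c:ℤ)^(p-1) - ((a:ℤ)*(b:ℤ))^(p-1) := Int.ModEq.dvd hpow.symm
    have heq : (p:ℤ) * ((C:ℤ) - A - B) = (p:ℤ)^2 * ((A:ℤ)*B + k) := by
      have hab : ((a:ℤ)*(b:ℤ))^(p-1) = (a:ℤ)^(p-1) * (b:ℤ)^(p-1) := mul_pow _ _ _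
      have hABprod : (p:ℤ)^2 * ((A:ℤ)*(B:ℤ)) = ((a:ℤ)^(p-1)-1)*((b:ℤ)^(p-1)-1) := by
        linear_combination ((b:ℤ)^(p-1)-1)*hA' + ((p:ℤ)*(A:ℤ))*hB'
      linear_combination hC' - hA' - hB' - hABprod + hk + hab
    have hpne : (p:ℤ) ≠ 0 := by exact_mod_cast hp.out.ne_zero
    have hdvd : (p:ℤ) ∣ ((C:ℤ) - A - B) := by
      refine ⟨(A:ℤ)*B + k, mul_left_cancel₀ hpne ?_⟩
      rw [heq]; ring
    have h0 : (((C:ℤ) - A - B : ℤ) : ZMod p) = 0 := by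
      rw [ZMod.intCast_zmod_eq_zero_iff_dvd]; exact_mod_cast hdvd
    push_cast at h0
    linear_combination h0
  rw [Hquot, Hquot, Hquot, if_neg ha, if_neg hb, if_neg hcd,
    fq_cast p ha, fq_cast p hb, fq_cast p hcd, ← hA, ← hB, ← hC, key]
  ring

lemma leg_congr (p : ℕ) [hp : Fact p.Prime] {a b : ℕ} (h : a % p = b % p) :
    legendreSym p a = legendreSym p b := by
  rw [legendreSym.mod, legendreSym.mod p (b:ℤ)]
  congr 1
  omega

lemma leg_mul_mod (p : ℕ) [hp : Fact p.Prime] (a b : ℕ) :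
    legendreSym p ((a * b % p ^ 2 : ℕ) : ℤ) = legendreSym p a * legendreSym p b := by
  have h : (a * b % p ^ 2) % p = (a * b) % p := Nat.mod_mod_of_dvd _ (dvd_pow_self p two_ne_zero)
  rw [leg_congr p h, show ((a*b : ℕ) : ℤ) = (a:ℤ)*(b:ℤ) by push_cast; ring, legendreSym.mul]

lemma mem_DQ (p : ℕ) [hp : Fact p.Prime] {w : ℕ} {l : ZMod p} {ε : ℤ} {u : ℕ} :
    u ∈ (Dset p w l).filter (fun u : ℕ => legendreSym p u = ε) ↔
      (u < p ^ 2 ∧ ¬ p ∣ u ∧ Hquot p w u = l) ∧ legendreSym p u = ε := by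
  rw [Finset.mem_filter, Dset, Finset.mem_filter, Finset.mem_range, Nat.coprime_comm,
    hp.out.coprime_iff_not_dvd]

lemma aux_img (p : ℕ) [hp : Fact p.Prime] {w a : ℕ} {l l' : ZMod p}
    (haR : a < p ^ 2) (had : ¬ p ∣ a) (haH : Hquot p w a = l') (haL : legendreSym p a = 1)
    (ε : ℤ) :
    ((Dset p w l).filter (fun u : ℕ => legendreSym p u = ε)).image (fun b => a * b % p ^ 2)
      = (Dset p w (l + l')).filter (fun u : ℕ => legendreSym p u = ε) := by
  have hp2 : 0 < p ^ 2 := pow_pos hp.out.pos 2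
  have hmodp : ∀ x y : ℕ, (x * y % p ^ 2) % p = (x * y) % p := fun x y =>
    Nat.mod_mod_of_dvd _ (dvd_pow_self p two_ne_zero)
  have hnd : ∀ x y : ℕ, ¬ p ∣ x → ¬ p ∣ y → ¬ p ∣ (x * y % p ^ 2) := by
    intro x y hx hy
    rw [Nat.dvd_iff_mod_eq_zero, hmodp, ← Nat.dvd_iff_mod_eq_zero]
    exact fun h => (hp.out.dvd_mul.mp h).elim hx hy
  ext c
  rw [Finset.mem_image]
  simp only [mem_DQ]
  constructor
  · rintro ⟨b, hb, rfl⟩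
    obtain ⟨⟨hbR, hbd, hbH⟩, hbL⟩ := hb
    refine ⟨⟨Nat.mod_lt _ hp2, hnd a b had hbd, ?_⟩, ?_⟩
    · rw [Hquot_mul p had hbd, haH, hbH]; ring
    · rw [leg_mul_mod, haL, hbL, one_mul]
  · rintro ⟨⟨hcR, hcd, hcH⟩, hcL⟩
    haveI : NeZero (p ^ 2) := ⟨hp2.ne'⟩
    have hcop : Nat.Coprime a (p ^ 2) :=
      Nat.Coprime.pow_right _ (Nat.coprime_comm.mp (hp.out.coprime_iff_not_dvd.mpr had))
    have hunit : IsUnit (a : ZMod (p ^ 2)) := (ZMod.isUnit_iff_coprime a (p ^ 2)).mpr hcop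
    set a' : ℕ := ((a : ZMod (p ^ 2))⁻¹).val with ha'
    have hinv : ((a * a' : ℕ) : ZMod (p ^ 2)) = 1 := by
      push_cast [ha', ZMod.natCast_val, ZMod.cast_id]
      exact ZMod.mul_inv_of_unit _ hunit
    have h1 : a * a' % p ^ 2 = 1 := by
      haveI : Fact (1 < p ^ 2) := ⟨lt_of_lt_of_le hp.out.one_lt (by nlinarith [hp.out.two_le])⟩
      have := ZMod.val_natCast (n := p ^ 2) (a * a')
      rw [hinv, ZMod.val_one] at this
      omega
    set b := a' * c % p ^ 2 with hb
    have hfb : a * b % p ^ 2 = c := by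
      have step : a * (a' * c % p ^ 2) % p ^ 2 = (a * a' % p ^ 2) * c % p ^ 2 := by
        conv_lhs => rw [Nat.mul_mod, Nat.mod_mod, ← Nat.mul_mod, ← mul_assoc]
        conv_rhs => rw [Nat.mul_mod, Nat.mod_mod, ← Nat.mul_mod]
      rw [hb, step, h1, one_mul, Nat.mod_eq_of_lt hcR]
    have ha'd : ¬ p ∣ a' := by
      intro h
      have hdvd : p ∣ a * a' := Dvd.dvd.mul_left h a
      have h3 : a * a' % p = 0 := by rwa [← Nat.dvd_iff_mod_eq_zero]
      have h2 : (a * a') % p = 1 % p := by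
        conv_lhs => rw [← Nat.mod_mod_of_dvd (a*a') (dvd_pow_self p two_ne_zero), h1]
      have := hp.out.two_le
      rw [h3, Nat.mod_eq_of_lt (by omega)] at h2
      omega
    have hbd : ¬ p ∣ b := hnd a' c ha'd hcd
    refine ⟨b, ⟨⟨Nat.mod_lt _ hp2, hbd, ?_⟩, ?_⟩, hfb⟩
    · have hmul := Hquot_mul p (w := w) had hbd
      rw [hfb, hcH, haH] at hmul
      have : Hquot p w b = l + l' - l' := by rw [hmul]; ring
      rwa [add_sub_cancel_right] at this
    · have hmul := leg_mul_mod p a b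
      rw [hfb, haL, one_mul] at hmul
      rw [← hmul, hcL]

/-- Facts (II) and (III): if `a ∈ Q_{l'}` then `aQ_l = Q_{(l+l') mod p}` and
`aN_l = N_{(l+l') mod p}`. -/
theorem Qset_Nset_smul_of_mem_Qset (p : ℕ) [hp : Fact p.Prime] (hodd : p ≠ 2)
    (w : ℕ) (hw1 : 1 ≤ w) (hw2 : w ≤ p - 1)
    (a : ℕ) (l l' : ZMod p) (ha : a ∈ Qset p w l') :
    (Qset p w l).image (fun b => a * b % p ^ 2) = Qset p w (l + l') ∧
    (Nset p w l).image (fun b => a * b % p ^ 2) = Nset p w (l + l') := by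
  simp only [Qset] at ha
  rw [mem_DQ] at ha
  obtain ⟨⟨haR, had, haH⟩, haL⟩ := ha
  constructor
  · simp only [Qset]
    exact aux_img p haR had haH haL 1
  · simp only [Nset]
    exact aux_img p haR had haH haL (-1)
end
end

section
/- Let p be an odd prime and w an integer with 1 ≤ w ≤ p−1. If a ∈ N_{l'} for some l' ∈ {0,...,p−1}, then aQ_l = N_{(l+l') mod p} and aN_l = Q_{(l+l') mod p} for every l ∈ {0,...,p−1}, where aS = {ab mod p² : b ∈ S}. -/
open Finset

noncomputable section

section Helpers
set_option linter.unusedSectionVars false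

variable (p : ℕ) [hp : Fact p.Prime]

private lemma legCongr (u v : ℕ) (h : (u : ZMod p) = (v : ZMod p)) :
    legendreSym p u = legendreSym p v := by
  unfold legendreSym; congr 1; push_cast; exact h

private lemma modP2Cast (x : ℕ) : ((x % p^2 : ℕ) : ZMod p) = (x : ZMod p) := by
  rw [ZMod.natCast_eq_natCast_iff]
  exact (Nat.mod_modEq x (p^2)).of_dvd (dvd_pow_self p two_ne_zero)

private lemma cancelP (c d : ℕ)
    (h : (p : ZMod (p^2)) * c = (p : ZMod (p^2)) * d) : (c : ZMod p) = (d : ZMod p) := by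
  have hp0 : 0 < p := hp.out.pos
  have h1 : ((p*c : ℕ) : ZMod (p^2)) = ((p*d : ℕ) : ZMod (p^2)) := by push_cast; exact h
  have h2 : p*c ≡ p*d [MOD p^2] := (ZMod.natCast_eq_natCast_iff _ _ _).mp h1
  have h3 : p * (c % p) = p * (d % p) := by
    unfold Nat.ModEq at h2
    rwa [pow_two, Nat.mul_mod_mul_left, Nat.mul_mod_mul_left] at h2
  exact (ZMod.natCast_eq_natCast_iff _ _ _).mpr (Nat.eq_of_mul_eq_mul_left hp0 h3)

private lemma fermatKey (u : ℕ) (hu : Nat.Coprime u p) :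
    (u : ZMod (p^2)) ^ (p - 1) = 1 + (p : ZMod (p^2)) * ((fermatQuot p u : ℕ) : ZMod (p^2)) := by
  have hpd : ¬ p ∣ u := (Nat.Prime.coprime_iff_not_dvd hp.out).mp hu.symm
  have hu0 : u ≠ 0 := fun h => hpd (h ▸ dvd_zero p)
  have hu1 : 1 ≤ u ^ (p-1) := Nat.one_le_pow _ _ (Nat.pos_of_ne_zero hu0)
  have hdvd : p ∣ u ^ (p-1) - 1 := by
    have hz : (u : ZMod p) ≠ 0 := fun h => hpd ((ZMod.natCast_eq_zero_iff u p).mp h)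
    have h1 : (u : ZMod p) ^ (p-1) = 1 := ZMod.pow_card_sub_one_eq_one hz
    have h2 : ((u^(p-1) : ℕ) : ZMod p) = ((1:ℕ) : ZMod p) := by push_cast; exact h1
    have h3 : u^(p-1) ≡ 1 [MOD p] := (ZMod.natCast_eq_natCast_iff _ _ _).mp h2
    exact (Nat.modEq_iff_dvd' hu1).mp h3.symm
  set t := (u^(p-1) - 1)/p with ht
  have heq : u^(p-1) = 1 + p * t := by
    obtain ⟨k, hk⟩ := hdvd
    have htk : t = k := by rw [ht, hk]; exact Nat.mul_div_cancel_left k hp.out.pos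
    rw [htk]
    omega
  have hq : fermatQuot p u = t % p := by simp [fermatQuot, hpd]; rfl
  have hcast : ((u^(p-1) : ℕ) : ZMod (p^2)) = 1 + (p : ZMod (p^2)) * (t : ZMod (p^2)) := by
    rw [heq]; push_cast; ring
  have hmod : (p : ZMod (p^2)) * ((t % p : ℕ) : ZMod (p^2))
      = (p : ZMod (p^2)) * (t : ZMod (p^2)) := by
    conv_rhs => rw [show t = p * (t / p) + t % p from (Nat.div_add_mod t p).symm]
    have hpp : ((p : ZMod (p^2)))^2 = 0 := by rw [← Nat.cast_pow, ZMod.natCast_self]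
    push_cast
    linear_combination (-((t/p : ℕ) : ZMod (p^2))) * hpp
  rw [hq, hmod, ← hcast]
  push_cast
  ring

private lemma copMulMod (u v : ℕ) (hu : Nat.Coprime u p) (hv : Nat.Coprime v p) :
    Nat.Coprime (u * v % p^2) p := by
  have h : ¬ p ∣ u * v % p^2 := by
    intro h
    have : ((u*v % p^2 : ℕ) : ZMod p) = 0 := (ZMod.natCast_eq_zero_iff _ p).mpr h
    rw [modP2Cast] at this
    have : p ∣ u * v := (ZMod.natCast_eq_zero_iff _ p).mp this
    exact (Nat.Prime.coprime_iff_not_dvd hp.out).mp (hu.mul hv).symm this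
  exact Nat.coprime_comm.mp ((Nat.Prime.coprime_iff_not_dvd hp.out).mpr h)

private lemma fqMul (u v : ℕ) (hu : Nat.Coprime u p) (hv : Nat.Coprime v p) :
    ((fermatQuot p (u * v % p^2) : ℕ) : ZMod p)
      = ((fermatQuot p u : ℕ) : ZMod p) + ((fermatQuot p v : ℕ) : ZMod p) := by
  have hm : Nat.Coprime (u * v % p^2) p := copMulMod p u v hu hv
  have hcast : ((u * v % p^2 : ℕ) : ZMod (p^2)) = (u : ZMod (p^2)) * v := by
    rw [ZMod.natCast_mod]; push_cast; ring
  have e1 := fermatKey p (u * v % p^2) hm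
  have e2 := fermatKey p u hu
  have e3 := fermatKey p v hv
  rw [hcast, mul_pow, e2, e3] at e1
  have hpp : (p : ZMod (p^2)) * (p : ZMod (p^2)) = 0 := by
    rw [← Nat.cast_mul, ← pow_two, ZMod.natCast_self]
  have key : (p : ZMod (p^2)) * ((fermatQuot p (u * v % p^2) : ℕ) : ZMod (p^2))
      = (p : ZMod (p^2)) * ((fermatQuot p u + fermatQuot p v : ℕ) : ZMod (p^2)) := by
    push_cast
    linear_combination -e1 + ((fermatQuot p u : ℕ) : ZMod (p^2))
      * ((fermatQuot p v : ℕ) : ZMod (p^2)) * hpp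
  have := cancelP p _ _ key
  push_cast at this
  exact this

private lemma HquotMul (w u v : ℕ) (hu : Nat.Coprime u p) (hv : Nat.Coprime v p) :
    Hquot p w (u * v % p^2) = Hquot p w u + Hquot p w v := by
  have hm : Nat.Coprime (u * v % p^2) p := copMulMod p u v hu hv
  have h1 : ¬ p ∣ u := (Nat.Prime.coprime_iff_not_dvd hp.out).mp hu.symm
  have h2 : ¬ p ∣ v := (Nat.Prime.coprime_iff_not_dvd hp.out).mp hv.symm
  have h3 : ¬ p ∣ u * v % p^2 := (Nat.Prime.coprime_iff_not_dvd hp.out).mp hm.symm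
  unfold Hquot
  rw [if_neg h1, if_neg h2, if_neg h3, fqMul p u v hu hv]
  ring

private lemma legMulMod (u v : ℕ) :
    legendreSym p (u * v % p^2 : ℕ) = legendreSym p u * legendreSym p v := by
  rw [legCongr p (u * v % p^2) (u * v) (modP2Cast p (u*v))]
  push_cast
  exact legendreSym.mul p u v

private lemma modEqOfCast (x v : ℕ) (hv : v < p^2)
    (h : (x : ZMod (p^2)) = (v : ZMod (p^2))) : x % p^2 = v := by
  have h2 : x ≡ v [MOD p^2] := (ZMod.natCast_eq_natCast_iff _ _ _).mp h
  unfold Nat.ModEq at h2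
  rwa [Nat.mod_eq_of_lt hv] at h2

private lemma Hone (w : ℕ) : Hquot p w 1 = 0 := by
  have h1' : ¬ p ∣ 1 := fun h => by have := Nat.le_of_dvd one_pos h; have := hp.out.two_le; omega
  simp [Hquot, fermatQuot, h1']

private lemma keyImage (w a : ℕ) (l l' : ZMod p) (ha : Nat.Coprime a p)
    (hHa : Hquot p w a = l') (hla : legendreSym p a = -1) (s t : ℤ) (hst : t = -s) :
    ((Dset p w l).filter (fun u : ℕ => legendreSym p (u : ℤ) = s)).image (fun b : ℕ => a * b % p^2)
      = (Dset p w (l+l')).filter (fun u : ℕ => legendreSym p (u : ℤ) = t) := by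
  haveI : NeZero (p^2) := ⟨pow_ne_zero 2 hp.out.pos.ne'⟩
  have hp2 : 0 < p^2 := pow_pos hp.out.pos 2
  have hp2' : 1 < p^2 := by
    have := hp.out.two_le
    calc 1 < p := hp.out.one_lt
    _ ≤ p^2 := Nat.le_self_pow two_ne_zero p
  -- inverse of a mod p^2
  set a' : ℕ := ((a : ZMod (p^2))⁻¹).val with ha'def
  have hinv : (a : ZMod (p^2)) * ((a : ZMod (p^2)))⁻¹ = 1 :=
    ZMod.coe_mul_inv_eq_one a (ha.pow_right 2)
  have ha'cast : ((a' : ℕ) : ZMod (p^2)) = ((a : ZMod (p^2)))⁻¹ := by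
    rw [ha'def, ZMod.natCast_val, ZMod.cast_id]
  have haa' : (a : ZMod (p^2)) * (a' : ZMod (p^2)) = 1 := by rw [ha'cast]; exact hinv
  have haa1 : a * a' % p^2 = 1 := by
    apply modEqOfCast p _ 1 hp2'
    push_cast
    rw [haa']
  have ha'cop : Nat.Coprime a' p := by
    have hnd : ¬ p ∣ a' := by
      intro hd
      have h0 : ((a' : ℕ) : ZMod p) = 0 := (ZMod.natCast_eq_zero_iff a' p).mpr hd
      have h1 : ((a * a' % p^2 : ℕ) : ZMod p) = (1 : ZMod p) := by rw [haa1]; norm_num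
      rw [modP2Cast] at h1
      push_cast at h1
      rw [h0, mul_zero] at h1
      exact one_ne_zero h1.symm
    exact Nat.coprime_comm.mp ((Nat.Prime.coprime_iff_not_dvd hp.out).mpr hnd)
  have hHa' : Hquot p w a' = -l' := by
    have := HquotMul p w a a' ha ha'cop
    rw [haa1, Hone, hHa] at this
    linear_combination -this
  have hLa' : legendreSym p a' = -1 := by
    have := legMulMod p a a'
    rw [haa1, hla] at this
    norm_num at this
    linarith [this]
  ext v
  simp only [Finset.mem_image, Finset.mem_filter, Dset, Finset.mem_range]
  constructor
  · rintro ⟨b, ⟨⟨hb2, hbcop, hbH⟩, hbleg⟩, rfl⟩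
    refine ⟨⟨Nat.mod_lt _ hp2, copMulMod p a b ha hbcop, ?_⟩, ?_⟩
    · rw [HquotMul p w a b ha hbcop, hHa, hbH]; ring
    · rw [legMulMod p a b, hla, hbleg, hst]; ring
  · rintro ⟨⟨hv2, hvcop, hvH⟩, hvleg⟩
    refine ⟨a' * v % p^2, ⟨⟨Nat.mod_lt _ hp2, copMulMod p a' v ha'cop hvcop, ?_⟩, ?_⟩, ?_⟩
    · rw [HquotMul p w a' v ha'cop hvcop, hHa', hvH]; ring
    · rw [legMulMod p a' v, hLa', hvleg, hst]; ring
    · apply modEqOfCast p _ v hv2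
      push_cast [ZMod.natCast_mod]
      calc (a : ZMod (p^2)) * ((a' : ZMod (p^2)) * (v : ZMod (p^2)))
          = ((a : ZMod (p^2)) * (a' : ZMod (p^2))) * v := by ring
        _ = (v : ZMod (p^2)) := by rw [haa']; ring

end Helpers

/-- Facts (IV) and (V): if `a ∈ N_{l'}` then `aQ_l = N_{(l+l') mod p}` and
`aN_l = Q_{(l+l') mod p}`. -/
theorem Qset_Nset_smul_of_mem_Nset (p : ℕ) [hp : Fact p.Prime] (hodd : p ≠ 2)
    (w : ℕ) (hw1 : 1 ≤ w) (hw2 : w ≤ p - 1)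
    (a : ℕ) (l l' : ZMod p) (ha : a ∈ Nset p w l') :
    (Qset p w l).image (fun b => a * b % p ^ 2) = Nset p w (l + l') ∧
    (Nset p w l).image (fun b => a * b % p ^ 2) = Qset p w (l + l') := by
  simp only [Nset, Dset, Finset.mem_filter, Finset.mem_range] at ha
  obtain ⟨⟨_, hacop, haH⟩, haleg⟩ := ha
  constructor
  · exact keyImage p w a l l' hacop haH haleg 1 (-1) (by norm_num)
  · have h := keyImage p w a l l' hacop haH haleg (-1) 1 (by norm_num)
    exact h
end
end

section
/- Let p be an odd prime, w an integer with 1 ≤ w ≤ p−1, and β a primitive p²-th root of unity in the algebraic closure of F_2. Then G^odd(β^0) = 0, and G^odd(β^{kp}) equals the image of the integer (p−1)/2 in F_2 for every k = 1, ..., p−1. -/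
open Finset

noncomputable section

section aux
variable {p : ℕ} [hp : Fact p.Prime]

lemma my_ndvd {u : ℕ} (hu : u.Coprime p) : ¬ p ∣ u :=
  (Nat.Prime.coprime_iff_not_dvd hp.out).mp hu.symm

lemma my_one_le {u : ℕ} (hu : u.Coprime p) : 1 ≤ u ^ (p - 1) := by
  have h0 : u ≠ 0 := by
    rintro rfl
    exact hp.out.ne_one (Nat.coprime_zero_left p |>.mp hu)
  exact Nat.one_le_pow _ _ (Nat.pos_of_ne_zero h0)

lemma my_fermat {u : ℕ} (hu : u.Coprime p) : p ∣ u ^ (p - 1) - 1 := by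
  have h1 : ((u : ZMod p)) ≠ 0 := by
    rw [Ne, ZMod.natCast_eq_zero_iff]
    exact my_ndvd hu
  have h2 : ((u ^ (p - 1) - 1 : ℕ) : ZMod p) = 0 := by
    rw [Nat.cast_sub (my_one_le hu)]
    push_cast
    rw [ZMod.pow_card_sub_one_eq_one h1]
    ring
  exact (ZMod.natCast_eq_zero_iff _ _).mp h2

lemma key_inj {w : ℕ} (hw1 : 1 ≤ w) (hw2 : w ≤ p - 1) {u u' : ℕ}
    (hu : u < p ^ 2) (hu' : u' < p ^ 2) (hcu : u.Coprime p) (hcu' : u'.Coprime p)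
    (hmod : u % p = u' % p) (hH : Hquot p w u = Hquot p w u') : u = u' := by
  have hnd : ¬ p ∣ u := my_ndvd hcu
  have hnd' : ¬ p ∣ u' := my_ndvd hcu'
  rw [Hquot, if_neg hnd, Hquot, if_neg hnd'] at hH
  have hw0 : (w : ZMod p) ≠ 0 := by
    rw [Ne, ZMod.natCast_eq_zero_iff]
    intro h
    have := Nat.le_of_dvd hw1 h
    omega
  have hF : ((fermatQuot p u : ℕ) : ZMod p) = ((fermatQuot p u' : ℕ) : ZMod p) :=
    mul_left_cancel₀ (neg_ne_zero.mpr hw0) hH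
  have hlt : fermatQuot p u < p := by
    rw [fermatQuot, if_neg hnd]; exact Nat.mod_lt _ hp.out.pos
  have hlt' : fermatQuot p u' < p := by
    rw [fermatQuot, if_neg hnd']; exact Nat.mod_lt _ hp.out.pos
  have hFeq : fermatQuot p u = fermatQuot p u' := by
    have h := (ZMod.natCast_eq_natCast_iff _ _ _).mp hF
    rwa [Nat.ModEq, Nat.mod_eq_of_lt hlt, Nat.mod_eq_of_lt hlt'] at h
  -- u^(p-1) ≡ u'^(p-1) mod p^2
  rw [fermatQuot, if_neg hnd, fermatQuot, if_neg hnd'] at hFeq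
  have hdvd := my_fermat hcu
  have hdvd' := my_fermat hcu'
  have h1 : u ^ (p - 1) - 1 ≡ u' ^ (p - 1) - 1 [MOD p ^ 2] := by
    have hmm : (u ^ (p - 1) - 1) / p ≡ (u' ^ (p - 1) - 1) / p [MOD p] := hFeq
    have := hmm.mul_left' (c := p)
    rwa [Nat.mul_div_cancel' hdvd, Nat.mul_div_cancel' hdvd', ← sq] at this
  have hpow1 : u ^ (p - 1) ≡ u' ^ (p - 1) [MOD p ^ 2] := by
    have := h1.add_right 1
    rwa [Nat.sub_add_cancel (my_one_le hcu), Nat.sub_add_cancel (my_one_le hcu')] at this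
  have hpowp : ((p : ℤ)) ^ 2 ∣ (u : ℤ) ^ p - (u' : ℤ) ^ p := by
    have hd : ((p : ℤ)) ∣ (u : ℤ) - (u' : ℤ) := by
      rw [Int.dvd_iff_emod_eq_zero, Int.sub_emod]
      have : (u : ℤ) % p = (u' : ℤ) % p := by
        rw [← Int.natCast_mod, ← Int.natCast_mod, hmod]
      rw [this, sub_self, Int.zero_emod]
    have := dvd_sub_pow_of_dvd_sub hd 1
    simpa using this
  haveI : NeZero (p ^ 2) := ⟨pow_ne_zero 2 hp.out.ne_zero⟩
  set R := ZMod (p ^ 2)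
  have hx : IsUnit ((u : R)) := (ZMod.isUnit_iff_coprime u (p ^ 2)).mpr (hcu.pow_right 2)
  have h1R : ((u : R)) ^ (p - 1) = ((u' : R)) ^ (p - 1) := by
    have := (ZMod.natCast_eq_natCast_iff _ _ _).mpr hpow1
    push_cast at this
    exact this
  have h2R : ((u : R)) ^ p = ((u' : R)) ^ p := by
    have h : (((u : ℤ) ^ p - (u' : ℤ) ^ p : ℤ) : R) = 0 :=
      (ZMod.intCast_zmod_eq_zero_iff_dvd _ _).mpr (by exact_mod_cast hpowp)
    push_cast at h
    exact sub_eq_zero.mp h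
  have hfin : (u : R) = (u' : R) := by
    have e1 : ((u : R)) ^ (p - 1) * (u : R) = ((u : R)) ^ (p - 1) * (u' : R) := by
      have hu1 : ((u : R)) ^ (p - 1) * (u : R) = ((u : R)) ^ p := by
        rw [← pow_succ]; congr 1; omega
      have hu2 : ((u' : R)) ^ (p - 1) * (u' : R) = ((u' : R)) ^ p := by
        rw [← pow_succ]; congr 1; omega
      rw [hu1, h2R, ← hu2, h1R]
    exact (hx.pow (p - 1)).mul_left_cancel e1
  have := (ZMod.natCast_eq_natCast_iff _ _ _).mp hfin
  rwa [Nat.ModEq, Nat.mod_eq_of_lt hu, Nat.mod_eq_of_lt hu'] at this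

end aux

section aux2
variable {p : ℕ} [hp : Fact p.Prime]

lemma my_mod_mem {u : ℕ} (hcu : u.Coprime p) : u % p ∈ Finset.Ico 1 p := by
  rw [Finset.mem_Ico]
  constructor
  · rcases Nat.eq_zero_or_pos (u % p) with h | h
    · exact absurd (Nat.dvd_of_mod_eq_zero h) (my_ndvd hcu)
    · exact h
  · exact Nat.mod_lt _ hp.out.pos

lemma my_image_eq {w : ℕ} (hw1 : 1 ≤ w) (hw2 : w ≤ p - 1) :
    (((Finset.range (p ^ 2)).filter fun u => u.Coprime p).image
      fun u => (u % p, Hquot p w u)) = (Finset.Ico 1 p) ×ˢ (Finset.univ : Finset (ZMod p)) := by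
  apply Finset.eq_of_subset_of_card_le
  · intro x hx
    simp only [Finset.mem_image, Finset.mem_filter, Finset.mem_range] at hx
    obtain ⟨u, ⟨hu2, hcu⟩, rfl⟩ := hx
    simp only [Finset.mem_product, Finset.mem_univ, and_true]
    exact my_mod_mem hcu
  · have hinj : Set.InjOn (fun u => (u % p, Hquot p w u))
        ((Finset.range (p ^ 2)).filter fun u => u.Coprime p) := by
      intro a ha b hb hab
      simp only [Finset.coe_filter, Set.mem_setOf_eq, Finset.mem_range] at ha hb
      exact key_inj hw1 hw2 ha.1 hb.1 ha.2 hb.2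
        (congrArg Prod.fst hab) (congrArg Prod.snd hab)
    rw [Finset.card_image_of_injOn hinj]
    have hcard : ((Finset.range (p ^ 2)).filter fun u => u.Coprime p).card = p * (p - 1) := by
      have h1 : ((Finset.range (p ^ 2)).filter fun u => u.Coprime p) =
          ((Finset.range (p ^ 2)).filter fun u => (p ^ 2).Coprime u) := by
        apply Finset.filter_congr
        intro x _
        simp [Nat.coprime_comm, Nat.coprime_pow_left_iff (by norm_num : 0 < 2)]
      have h2 := Nat.totient_prime_pow hp.out (n := 2) (by norm_num)
      rw [Nat.totient] at h2
      rw [h1, h2]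
      norm_num
    rw [hcard, Finset.card_product, Nat.card_Ico, Finset.card_univ, ZMod.card]
    exact Nat.le_of_eq (Nat.mul_comm _ _)

lemma my_surj {w : ℕ} (hw1 : 1 ≤ w) (hw2 : w ≤ p - 1) (l : ZMod p) {v : ℕ}
    (hv : v ∈ Finset.Ico 1 p) : ∃ u, ∃ _ : u ∈ Dset p w l, u % p = v := by
  have hvmem : (v, l) ∈ (Finset.Ico 1 p) ×ˢ (Finset.univ : Finset (ZMod p)) := by
    simp [Finset.mem_product, hv]
  rw [← my_image_eq hw1 hw2, Finset.mem_image] at hvmem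
  obtain ⟨u, hu, huv⟩ := hvmem
  rw [Finset.mem_filter, Finset.mem_range] at hu
  refine ⟨u, ?_, congrArg Prod.fst huv⟩
  rw [Dset, Finset.mem_filter, Finset.mem_range]
  exact ⟨hu.1, hu.2, congrArg Prod.snd huv⟩

lemma my_pow_mod {F : Type*} [CommRing F] {γ : F} (hγ : γ ^ p = 1) (a : ℕ) :
    γ ^ a = γ ^ (a % p) := by
  conv_lhs => rw [← Nat.div_add_mod a p]
  rw [pow_add, pow_mul, hγ, one_pow, one_mul]

lemma my_sum_D {w : ℕ} (hw1 : 1 ≤ w) (hw2 : w ≤ p - 1) (l : ZMod p)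
    {F : Type*} [CommRing F] {γ : F} (hγ : γ ^ p = 1) :
    ∑ u ∈ Dset p w l, γ ^ u = ∑ v ∈ Finset.Ico 1 p, γ ^ v := by
  apply Finset.sum_bij (fun u _ => u % p)
  · intro a ha
    rw [Dset, Finset.mem_filter, Finset.mem_range] at ha
    exact my_mod_mem ha.2.1
  · intro a ha b hb hab
    rw [Dset, Finset.mem_filter, Finset.mem_range] at ha hb
    exact key_inj hw1 hw2 ha.1 hb.1 ha.2.1 hb.2.1 hab (ha.2.2.trans hb.2.2.symm)
  · intro v hv
    exact my_surj hw1 hw2 l hv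
  · intro a _
    exact my_pow_mod hγ a

lemma my_leg_mod (u : ℕ) : legendreSym p (u : ℤ) = legendreSym p ((u % p : ℕ) : ℤ) := by
  rw [legendreSym.mod p (u : ℤ), Int.natCast_mod]

lemma my_sum_N {w : ℕ} (hw1 : 1 ≤ w) (hw2 : w ≤ p - 1) (l : ZMod p)
    {F : Type*} [CommRing F] {γ : F} (hγ : γ ^ p = 1) :
    ∑ u ∈ Nset p w l, γ ^ u = ∑ v ∈ QNR p, γ ^ v := by
  apply Finset.sum_bij (fun u _ => u % p)
  · intro a ha
    rw [Nset, Finset.mem_filter, Dset, Finset.mem_filter, Finset.mem_range] at ha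
    rw [QNR, Finset.mem_filter]
    refine ⟨my_mod_mem ha.1.2.1, ?_⟩
    rw [← my_leg_mod a]
    exact ha.2
  · intro a ha b hb hab
    rw [Nset, Finset.mem_filter, Dset, Finset.mem_filter, Finset.mem_range] at ha hb
    exact key_inj hw1 hw2 ha.1.1 hb.1.1 ha.1.2.1 hb.1.2.1 hab
      (ha.1.2.2.trans hb.1.2.2.symm)
  · intro v hv
    rw [QNR, Finset.mem_filter] at hv
    obtain ⟨u, hu, huv⟩ := my_surj hw1 hw2 l hv.1
    refine ⟨u, ?_, huv⟩
    rw [Nset, Finset.mem_filter]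
    refine ⟨hu, ?_⟩
    rw [my_leg_mod u, huv]
    exact hv.2
  · intro a _
    exact my_pow_mod hγ a

end aux2

section aux3
variable {p : ℕ} [hp : Fact p.Prime]

lemma my_range_eq : Finset.range p = insert 0 (Finset.Ico 1 p) := by
  ext x
  simp only [Finset.mem_range, Finset.mem_insert, Finset.mem_Ico]
  have := hp.out.pos
  omega

lemma my_QNR_conv : (QNR p) = (Finset.Ico 1 p).filter fun l : ℕ => ¬ legendreSym p (l : ℤ) = 1 := by
  apply Finset.filter_congr
  intro x hx
  rw [Finset.mem_Ico] at hx
  have hne : ((x : ℤ) : ZMod p) ≠ 0 := by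
    rw [Int.cast_natCast, Ne, ZMod.natCast_eq_zero_iff]
    intro h
    have := Nat.le_of_dvd (by omega) h
    omega
  rw [legendreSym.eq_neg_one_iff_not_one (p := p) hne]

lemma my_card_QNR (hodd : p ≠ 2) : (QNR p).card = (p - 1) / 2 := by
  have hsum0 : ∑ l ∈ Finset.range p, legendreSym p l = 0 := by
    have h := quadraticChar_sum_zero (F := ZMod p)
      (by rw [ZMod.ringChar_zmod_n]; exact hodd)
    rw [← h]
    apply Finset.sum_bij (fun (l : ℕ) (_ : l ∈ Finset.range p) => ((l : ZMod p)))
    · intro a _; exact Finset.mem_univ _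
    · intro a ha b hb hab
      rw [Finset.mem_range] at ha hb
      have := (ZMod.natCast_eq_natCast_iff _ _ _).mp hab
      rwa [Nat.ModEq, Nat.mod_eq_of_lt ha, Nat.mod_eq_of_lt hb] at this
    · intro b _
      exact ⟨b.val, Finset.mem_range.mpr b.val_lt, ZMod.natCast_rightInverse b⟩
    · intro a _
      simp [legendreSym]
  rw [my_range_eq, Finset.sum_insert (by simp)] at hsum0
  have h0 : legendreSym p ((0 : ℕ) : ℤ) = 0 := by
    rw [legendreSym.eq_zero_iff]
    simp
  rw [h0, zero_add,
    ← Finset.sum_filter_add_sum_filter_not (Finset.Ico 1 p)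
      (fun l : ℕ => legendreSym p (l : ℤ) = 1)] at hsum0
  have h1 : ∑ l ∈ (Finset.Ico 1 p).filter (fun l : ℕ => legendreSym p (l : ℤ) = 1),
      legendreSym p (l : ℤ) = ((QRes p).card : ℤ) := by
    rw [Finset.sum_congr rfl (fun x hx => (Finset.mem_filter.mp hx).2)]
    simp [QRes]
  have h2 : ∑ l ∈ (Finset.Ico 1 p).filter (fun l : ℕ => ¬ legendreSym p (l : ℤ) = 1),
      legendreSym p (l : ℤ) = -((QNR p).card : ℤ) := by
    rw [← my_QNR_conv]
    have hh : ∀ x ∈ QNR p, legendreSym p (x : ℤ) = -1 := by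
      intro x hx
      rw [QNR, Finset.mem_filter] at hx
      exact hx.2
    rw [Finset.sum_congr rfl hh]
    simp
  rw [h1, h2] at hsum0
  have hcards : (QRes p).card = (QNR p).card := by omega
  have htot : (QRes p).card + (QNR p).card = p - 1 := by
    have h := Finset.card_filter_add_card_filter_not
      (s := Finset.Ico 1 p) (p := fun l : ℕ => legendreSym p (l : ℤ) = 1)
    rw [← my_QNR_conv] at h
    rw [QRes]
    rw [h, Nat.card_Ico]
  omega

end aux3

section main
variable {p : ℕ} [hp : Fact p.Prime]

lemma my_even (hodd : p ≠ 2) : (((p - 1 : ℕ)) : AlgebraicClosure (ZMod 2)) = 0 := by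
  rw [CharP.cast_eq_zero_iff (AlgebraicClosure (ZMod 2)) 2 (p - 1)]
  exact (Nat.Odd.sub_odd (hp.out.odd_of_ne_two hodd) odd_one).two_dvd

lemma my_Godd {w : ℕ} (hw1 : 1 ≤ w) (hw2 : w ≤ p - 1) (hodd : p ≠ 2)
    {γ : AlgebraicClosure (ZMod 2)} (hγ : γ ^ p = 1) :
    GoddEval p w γ
      = ((((p - 1) / 2 : ℕ)) : AlgebraicClosure (ZMod 2)) * (∑ v ∈ Finset.Ico 1 p, γ ^ v) := by
  rw [GoddEval]
  rw [Finset.sum_congr rfl (fun l _ => my_sum_D hw1 hw2 _ hγ),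
      Finset.sum_congr rfl (fun l _ => my_sum_N hw1 hw2 _ hγ),
      Finset.sum_const, Finset.sum_const, nsmul_eq_mul, nsmul_eq_mul,
      my_card_QNR hodd, Nat.card_Ico, my_even hodd, zero_mul, add_zero]

end main

/-- Lemma: values of `G^odd` at `β^(kp)` for a primitive `p²`-th root of unity `β`. -/
theorem GoddEval_at_pow_kp (p : ℕ) [hp : Fact p.Prime] (hodd : p ≠ 2)
    (w : ℕ) (hw1 : 1 ≤ w) (hw2 : w ≤ p - 1)
    (β : AlgebraicClosure (ZMod 2)) (hβ : IsPrimitiveRoot β (p ^ 2)) :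
    GoddEval p w (β ^ 0) = 0 ∧
    ∀ k : ℕ, 1 ≤ k → k ≤ p - 1 →
      GoddEval p w (β ^ (k * p)) = (((p - 1) / 2 : ℕ) : AlgebraicClosure (ZMod 2)) := by
  constructor
  · rw [pow_zero, my_Godd hw1 hw2 hodd (one_pow p)]
    have h1 : ∑ v ∈ Finset.Ico 1 p, (1 : AlgebraicClosure (ZMod 2)) ^ v
        = (((p - 1 : ℕ)) : AlgebraicClosure (ZMod 2)) := by
      simp [Nat.card_Ico]
    rw [h1, my_even hodd, mul_zero]
  · intro k hk1 hk2
    have hplt := hp.out.two_le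
    have h1 : IsPrimitiveRoot (β ^ p) p :=
      IsPrimitiveRoot.pow (pow_pos hp.out.pos 2) hβ (sq p)
    have hkcop : k.Coprime p := Nat.Coprime.symm
      (hp.out.coprime_iff_not_dvd.mpr (fun h => by
        have := Nat.le_of_dvd (by omega) h; omega))
    have h2 : IsPrimitiveRoot (β ^ (k * p)) p := by
      have h := h1.pow_of_coprime k hkcop
      rwa [← pow_mul, mul_comm p k] at h
    rw [my_Godd hw1 hw2 hodd h2.pow_eq_one]
    have hA : ∑ v ∈ Finset.Ico 1 p, (β ^ (k * p)) ^ v = 1 := by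
      have hg := h2.geom_sum_eq_zero hp.out.one_lt
      rw [my_range_eq, Finset.sum_insert (by simp), pow_zero] at hg
      rw [eq_neg_of_add_eq_zero_right hg]
      exact CharTwo.neg_eq 1
    rw [hA, mul_one]
end
end

section
/- Let p be an odd prime, w an integer with 1 ≤ w ≤ p−1, and β a primitive p²-th root of unity in the algebraic closure of F_2. (1) If 2 ∈ Q_{ℓ₀} for some ℓ₀ with 1 ≤ ℓ₀ ≤ p−1, then the set {n : 0 ≤ n < p², gcd(n,p) = 1, G^odd(β^n) = 0} is either empty or has exactly (p² − p)/2 elements. (2) If 2 ∈ N_{ℓ₀} for some ℓ₀ with 1 ≤ ℓ₀ ≤ p−1, then G^odd(β^n) ≠ 0 for all n with 0 ≤ n < p² and gcd(n,p) = 1. -/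
open Finset
open scoped Classical

noncomputable section

section Aux

variable {p : ℕ} [hp : Fact p.Prime]

/-- `(x-1)/p` as an element of `ZMod p`, for `x : ZMod (p^2)`. -/
def psi (p : ℕ) (x : ZMod (p ^ 2)) : ZMod p := (((x.val - 1) / p : ℕ) : ZMod p)

lemma sq_one_lt : 1 < p ^ 2 := Nat.one_lt_pow (by norm_num) hp.out.one_lt

instance : NeZero (p ^ 2) := ⟨pow_ne_zero 2 hp.out.ne_zero⟩

lemma psi_mul {x y : ZMod (p ^ 2)} (hx : x.val % p = 1) (hy : y.val % p = 1) :
    (x * y).val % p = 1 ∧ psi p (x * y) = psi p x + psi p y := by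
  have hp1 : 1 < p := hp.out.one_lt
  obtain ⟨a, hxv⟩ : ∃ a, x.val = p * a + 1 :=
    ⟨x.val / p, by have := Nat.div_add_mod x.val p; omega⟩
  obtain ⟨b, hyv⟩ : ∃ b, y.val = p * b + 1 :=
    ⟨y.val / p, by have := Nat.div_add_mod y.val p; omega⟩
  set c := p * (a * b) + a + b with hc
  have hprod : x.val * y.val = p * c + 1 := by rw [hxv, hyv, hc]; ring
  have hcp : c % p < p := Nat.mod_lt _ (by omega)
  have hmod : (p * c + 1) % p ^ 2 = p * (c % p) + 1 := by
    have h1 : p * c + 1 = (p * (c % p) + 1) + p ^ 2 * (c / p) := by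
      have h2 : p * c = p * (c % p) + p ^ 2 * (c / p) := by nlinarith [Nat.div_add_mod c p]
      omega
    rw [h1, Nat.add_mul_mod_self_left, Nat.mod_eq_of_lt (by nlinarith)]
  have hval : (x * y).val = p * (c % p) + 1 := by
    rw [ZMod.val_mul, hprod, hmod]
  have hdiv : ∀ m : ℕ, (p * m + 1 - 1) / p = m := fun m => by
    rw [Nat.add_sub_cancel, Nat.mul_div_cancel_left _ hp.out.pos]
  refine ⟨by rw [hval, Nat.mul_add_mod, Nat.mod_eq_of_lt hp1], ?_⟩
  have h1 : psi p (x * y) = ((c % p : ℕ) : ZMod p) := by rw [psi, hval, hdiv]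
  have h2 : psi p x = ((a : ℕ) : ZMod p) := by rw [psi, hxv, hdiv]
  have h3 : psi p y = ((b : ℕ) : ZMod p) := by rw [psi, hyv, hdiv]
  rw [h1, h2, h3, ZMod.natCast_mod, hc]
  push_cast
  simp [ZMod.natCast_self]

lemma val_one_sq : (1 : ZMod (p ^ 2)).val = 1 := by
  haveI : Fact (1 < p ^ 2) := ⟨sq_one_lt⟩
  exact ZMod.val_one _

lemma psi_pow {x : ZMod (p ^ 2)} (hx : x.val % p = 1) (m : ℕ) :
    (x ^ m).val % p = 1 ∧ psi p (x ^ m) = (m : ℕ) * psi p x := by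
  induction m with
  | zero =>
      refine ⟨?_, ?_⟩
      · rw [pow_zero, val_one_sq, Nat.mod_eq_of_lt hp.out.one_lt]
      · rw [pow_zero]; simp [psi, val_one_sq]
  | succ m ih =>
      have h := psi_mul ih.1 hx
      refine ⟨?_, ?_⟩
      · simp only [pow_succ]; exact h.1
      · simp only [pow_succ]; rw [h.2, ih.2]; push_cast; ring

lemma not_dvd_of_coprime {u : ℕ} (hu : Nat.Coprime u p) : ¬ p ∣ u :=
  (Nat.Prime.coprime_iff_not_dvd hp.out).mp hu.symm

lemma cast_ne_zero_of_coprime {u : ℕ} (hu : Nat.Coprime u p) : (u : ZMod p) ≠ 0 := by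
  rw [Ne, ZMod.natCast_eq_zero_iff]
  exact not_dvd_of_coprime hu

lemma pow_mod_p_one {u : ℕ} (hu : Nat.Coprime u p) : u ^ (p - 1) % p = 1 := by
  have h1 : ((u : ZMod p)) ^ (p - 1) = 1 := ZMod.pow_card_sub_one_eq_one (cast_ne_zero_of_coprime hu)
  have h2 : ((u ^ (p - 1) : ℕ) : ZMod p) = 1 := by push_cast; exact h1
  haveI : Fact (1 < p) := ⟨hp.out.one_lt⟩
  have := ZMod.val_natCast (n := p) (u ^ (p - 1))
  rw [h2, ZMod.val_one] at this
  omega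

lemma val_pow_fermat {u : ℕ} (hu : Nat.Coprime u p) :
    (((u : ZMod (p ^ 2))) ^ (p - 1)).val % p = 1 := by
  have h1 : ((u : ZMod (p ^ 2))) ^ (p - 1) = ((u ^ (p - 1) : ℕ) : ZMod (p ^ 2)) := by push_cast; rfl
  rw [h1, ZMod.val_natCast, Nat.mod_mod_of_dvd _ (dvd_pow_self p (by norm_num))]
  exact pow_mod_p_one hu

end Aux
section Aux2

variable {p : ℕ} [hp : Fact p.Prime]

lemma fermatQuot_psi {u : ℕ} (hu : Nat.Coprime u p) :
    ((fermatQuot p u : ℕ) : ZMod p) = psi p (((u : ZMod (p ^ 2))) ^ (p - 1)) := by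
  have hp1 : 1 < p := hp.out.one_lt
  have hu0 : 1 ≤ u := by
    rcases Nat.eq_zero_or_pos u with h | h
    · exfalso; exact not_dvd_of_coprime hu (h ▸ dvd_zero p)
    · exact h
  set M := u ^ (p - 1) with hM
  have hM1 : 1 ≤ M := Nat.one_le_pow _ _ hu0
  have hMp : M % p = 1 := pow_mod_p_one hu
  obtain ⟨k, hk⟩ : ∃ k, M = p * k + 1 := ⟨M / p, by have := Nat.div_add_mod M p; omega⟩
  have hcast : ((u : ZMod (p ^ 2))) ^ (p - 1) = ((M : ℕ) : ZMod (p ^ 2)) := by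
    rw [hM]; push_cast; rfl
  rw [hcast]
  have hval : ((M : ℕ) : ZMod (p ^ 2)).val = M % p ^ 2 := ZMod.val_natCast _ M
  obtain ⟨q, r, hqr, hr⟩ : ∃ q r, M = p ^ 2 * q + r ∧ r = M % p ^ 2 :=
    ⟨M / p ^ 2, M % p ^ 2, by have := Nat.div_add_mod M (p ^ 2); omega, rfl⟩
  have hrp : r % p = 1 := by
    rw [hr, Nat.mod_mod_of_dvd _ (dvd_pow_self p (by norm_num))]; exact hMp
  obtain ⟨t, ht⟩ : ∃ t, r = p * t + 1 := ⟨r / p, by have := Nat.div_add_mod r p; omega⟩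
  have hfq : fermatQuot p u = ((M - 1) / p) % p := by
    rw [fermatQuot, if_neg (not_dvd_of_coprime hu)]
  have hMk : (M - 1) / p = p * q + t := by
    have : M - 1 = p * (p * q + t) := by rw [hqr, ht, pow_two]; ring_nf; omega
    rw [this, Nat.mul_div_cancel_left _ hp.out.pos]
  have hpsit : psi p ((M : ℕ) : ZMod (p ^ 2)) = ((t : ℕ) : ZMod p) := by
    rw [psi, hval, ← hr, ht, Nat.add_sub_cancel, Nat.mul_div_cancel_left _ hp.out.pos]
  rw [hpsit, hfq, ZMod.natCast_mod, hMk]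
  push_cast
  simp [ZMod.natCast_self]

lemma Hquot_eq {u : ℕ} (hu : Nat.Coprime u p) (w : ℕ) :
    Hquot p w u = -(w : ZMod p) * psi p (((u : ZMod (p ^ 2))) ^ (p - 1)) := by
  rw [Hquot, if_neg (not_dvd_of_coprime hu), fermatQuot_psi hu]

lemma coprime_mul {u v : ℕ} (hu : Nat.Coprime u p) (hv : Nat.Coprime v p) :
    Nat.Coprime (u * v) p := Nat.Coprime.mul hu hv

lemma coprime_of_not_dvd {u : ℕ} (h : ¬ p ∣ u) : Nat.Coprime u p :=
  ((Nat.Prime.coprime_iff_not_dvd hp.out).mpr h).symm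

lemma coprime_mod_sq {u : ℕ} (hu : Nat.Coprime u p) : Nat.Coprime (u % p ^ 2) p :=
  coprime_of_not_dvd fun h => not_dvd_of_coprime hu
      ((Nat.dvd_mod_iff (dvd_pow_self p (by norm_num))).mp h)

lemma Hquot_mul_s15 {u v : ℕ} (hu : Nat.Coprime u p) (hv : Nat.Coprime v p) (w : ℕ) :
    Hquot p w (u * v) = Hquot p w u + Hquot p w v := by
  rw [Hquot_eq (coprime_mul hu hv) w, Hquot_eq hu w, Hquot_eq hv w]
  have hcast : (((u * v : ℕ) : ZMod (p ^ 2))) ^ (p - 1)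
      = ((u : ZMod (p ^ 2))) ^ (p - 1) * ((v : ZMod (p ^ 2))) ^ (p - 1) := by
    push_cast; rw [mul_pow]
  rw [hcast, (psi_mul (val_pow_fermat hu) (val_pow_fermat hv)).2]
  ring

lemma Hquot_mod_sq {u : ℕ} (hu : Nat.Coprime u p) (w : ℕ) :
    Hquot p w (u % p ^ 2) = Hquot p w u := by
  rw [Hquot_eq (coprime_mod_sq hu) w, Hquot_eq hu w, ZMod.natCast_mod]

lemma Hquot_pow {u : ℕ} (hu : Nat.Coprime u p) (w j : ℕ) :
    Hquot p w (u ^ j) = (j : ZMod p) * Hquot p w u := by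
  induction j with
  | zero =>
      rw [pow_zero]
      have h1 : Nat.Coprime 1 p := Nat.coprime_one_left p
      rw [Hquot_eq h1 w]
      have : (((1 : ℕ) : ZMod (p ^ 2))) ^ (p - 1) = 1 := by rw [Nat.cast_one, one_pow]
      rw [this]
      have hpsi1 : psi p (1 : ZMod (p ^ 2)) = 0 := by simp [psi, val_one_sq]
      rw [hpsi1]
      push_cast
      ring
  | succ j ih =>
      rw [pow_succ, Hquot_mul_s15 (Nat.Coprime.pow_left j hu) hu, ih]
      push_cast
      ring

lemma Hquot_one_add_mul {k : ℕ} (hk : k < p) (w : ℕ) :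
    Hquot p w (1 + k * p) = (w : ZMod p) * (k : ZMod p) := by
  have hp1 : 1 < p := hp.out.one_lt
  have hco : Nat.Coprime (1 + k * p) p := coprime_of_not_dvd (by
    intro h
    have h2 : p ∣ 1 := (Nat.dvd_add_right ⟨k, mul_comm k p⟩).mp (by rwa [add_comm] at h)
    have := Nat.eq_one_of_dvd_one h2
    omega)
  rw [Hquot_eq hco w]
  have hlt : 1 + k * p < p ^ 2 := by nlinarith
  have hval : ((1 + k * p : ℕ) : ZMod (p ^ 2)).val = 1 + k * p := ZMod.val_cast_of_lt hlt
  have hE : ((1 + k * p : ℕ) : ZMod (p ^ 2)).val % p = 1 := by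
    rw [hval, Nat.add_mul_mod_self_right, Nat.mod_eq_of_lt hp1]
  have hpsi : psi p ((1 + k * p : ℕ) : ZMod (p ^ 2)) = (k : ZMod p) := by
    rw [psi, hval, Nat.add_sub_cancel_left, Nat.mul_div_cancel _ hp.out.pos]
  rw [(psi_pow hE (p - 1)).2, hpsi]
  have hcast : ((p - 1 : ℕ) : ZMod p) = -1 := by
    rw [Nat.cast_sub hp.out.one_le, ZMod.natCast_self, Nat.cast_one]; ring
  rw [hcast]
  ring

end Aux2
section Aux3

variable {p : ℕ} [hp : Fact p.Prime]

lemma leg_nat_congr {a b : ℕ} (h : (a : ZMod p) = (b : ZMod p)) :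
    legendreSym p a = legendreSym p b := by
  unfold legendreSym
  rw [Int.cast_natCast, Int.cast_natCast, h]

lemma leg_mul_nat (a b : ℕ) : legendreSym p (a * b : ℕ) = legendreSym p a * legendreSym p b := by
  rw [show ((a * b : ℕ) : ℤ) = (a : ℤ) * (b : ℤ) by push_cast; ring, legendreSym.mul]

lemma leg_pow_nat (a j : ℕ) : legendreSym p (a ^ j : ℕ) = (legendreSym p a) ^ j := by
  induction j with
  | zero => simpa using legendreSym.at_one p
  | succ j ih => rw [pow_succ, leg_mul_nat, ih, pow_succ]

lemma leg_mod_sq (a : ℕ) : legendreSym p (a % p ^ 2 : ℕ) = legendreSym p a :=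
  leg_nat_congr (by
    rw [← ZMod.natCast_mod (a % p ^ 2) p,
      Nat.mod_mod_of_dvd a (dvd_pow_self p (two_ne_zero : (2:ℕ) ≠ 0)), ZMod.natCast_mod])

lemma leg_unit {u : ℕ} (hu : Nat.Coprime u p) :
    legendreSym p u = 1 ∨ legendreSym p u = -1 :=
  legendreSym.eq_one_or_neg_one p (by
    rw [Int.cast_natCast]; exact cast_ne_zero_of_coprime hu)

lemma leg_one_add_mul (k : ℕ) : legendreSym p (1 + k * p : ℕ) = 1 := by
  have h := leg_nat_congr (p := p) (a := 1 + k * p) (b := 1) (by push_cast; simp [ZMod.natCast_self])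
  rw [h]
  simpa using legendreSym.at_one p

end Aux3
section Aux4

variable {p : ℕ} [hp : Fact p.Prime] {w : ℕ}

lemma Hquot_one : Hquot p w 1 = 0 := by
  have h0 := Hquot_pow (Nat.coprime_one_left p) w 0
  rw [pow_zero] at h0
  simpa using h0

lemma pow_mod_cycle {K : Type*} [Monoid K] {x : K} {m : ℕ} (hx : x ^ m = 1) (a : ℕ) :
    x ^ (a % m) = x ^ a := by
  conv_rhs => rw [← Nat.div_add_mod a m, pow_add, pow_mul, hx, one_pow, one_mul]

lemma mem_Dset_iff {l : ZMod p} {u : ℕ} :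
    u ∈ Dset p w l ↔ u < p ^ 2 ∧ Nat.Coprime u p ∧ Hquot p w u = l := by
  simp [Dset, Finset.mem_filter, Finset.mem_range, and_assoc]

lemma exists_inv {v : ℕ} (hv : Nat.Coprime v p) :
    ∃ v' : ℕ, v * v' % p ^ 2 = 1 ∧ Nat.Coprime v' p ∧
      Hquot p w v + Hquot p w v' = 0 ∧ legendreSym p v * legendreSym p v' = 1 := by
  obtain ⟨v', -, hv'⟩ := Nat.exists_mul_mod_eq_one_of_coprime (hv.pow_right 2) sq_one_lt
  have hv'cop : Nat.Coprime v' p := by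
    apply coprime_of_not_dvd
    intro h
    have h1 : p ∣ v * v' := Dvd.dvd.mul_left h v
    have h2 : p ∣ v * v' % p ^ 2 :=
      (Nat.dvd_mod_iff (dvd_pow_self p (two_ne_zero : (2:ℕ) ≠ 0))).mpr h1
    rw [hv'] at h2
    have := Nat.eq_one_of_dvd_one h2
    exact hp.out.one_lt.ne' this
  refine ⟨v', hv', hv'cop, ?_, ?_⟩
  · rw [← Hquot_mul_s15 hv hv'cop w, ← Hquot_mod_sq (coprime_mul hv hv'cop) w, hv', Hquot_one]
  · rw [← leg_mul_nat, ← leg_mod_sq, hv']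
    simpa using legendreSym.at_one p

lemma inv_cancel {u v v' : ℕ} (hu : u < p ^ 2) (h : v * v' % p ^ 2 = 1) :
    u * v % p ^ 2 * v' % p ^ 2 = u := by
  rw [Nat.mod_mul_mod, mul_assoc, Nat.mul_mod, h, Nat.mod_eq_of_lt hu, mul_one,
    Nat.mod_eq_of_lt hu]

lemma mem_Dset_shift {v : ℕ} (hv : Nat.Coprime v p) {l : ZMod p} {u : ℕ}
    (hu : u ∈ Dset p w l) : u * v % p ^ 2 ∈ Dset p w (l + Hquot p w v) := by
  obtain ⟨h1, h2, h3⟩ := mem_Dset_iff.mp hu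
  exact mem_Dset_iff.mpr ⟨Nat.mod_lt _ (by have := hp.out.pos; positivity),
    coprime_mod_sq (coprime_mul h2 hv),
    by rw [Hquot_mod_sq (coprime_mul h2 hv), Hquot_mul_s15 h2 hv, h3]⟩

lemma mem_DsetF_shift {v : ℕ} (hv : Nat.Coprime v p) {l : ZMod p} {ε : ℤ} {u : ℕ}
    (hu : u ∈ (Dset p w l).filter (fun u : ℕ => legendreSym p u = ε)) :
    u * v % p ^ 2 ∈ (Dset p w (l + Hquot p w v)).filter
      (fun u : ℕ => legendreSym p u = ε * legendreSym p v) := by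
  rw [Finset.mem_filter] at hu ⊢
  refine ⟨mem_Dset_shift hv hu.1, ?_⟩
  rw [leg_mod_sq, leg_mul_nat, hu.2]

lemma sum_Dset_shift {x : AlgebraicClosure (ZMod 2)} (hx : x ^ p ^ 2 = 1)
    {v : ℕ} (hv : Nat.Coprime v p) (l : ZMod p) :
    ∑ u ∈ Dset p w l, x ^ (u * v) = ∑ u ∈ Dset p w (l + Hquot p w v), x ^ u := by
  obtain ⟨v', hvv', hv'cop, hHsum, hlegmul⟩ := exists_inv (w := w) hv
  have hv'v : v' * v % p ^ 2 = 1 := by rwa [mul_comm] at hvv'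
  have hl2 : l + Hquot p w v + Hquot p w v' = l := by rw [add_assoc, hHsum, add_zero]
  refine Finset.sum_nbij' (fun u => u * v % p ^ 2) (fun u => u * v' % p ^ 2) ?_ ?_ ?_ ?_ ?_
  · intro a ha; exact mem_Dset_shift hv ha
  · intro a ha
    have := mem_Dset_shift (l := l + Hquot p w v) hv'cop ha
    rwa [hl2] at this
  · intro a ha; exact inv_cancel (mem_Dset_iff.mp ha).1 hvv'
  · intro a ha; exact inv_cancel (mem_Dset_iff.mp ha).1 hv'v
  · intro a ha; exact (pow_mod_cycle hx _).symm

lemma sum_DsetF_shift {x : AlgebraicClosure (ZMod 2)} (hx : x ^ p ^ 2 = 1)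
    {v : ℕ} (hv : Nat.Coprime v p) (l : ZMod p) (ε : ℤ) :
    ∑ u ∈ (Dset p w l).filter (fun u : ℕ => legendreSym p u = ε), x ^ (u * v)
      = ∑ u ∈ (Dset p w (l + Hquot p w v)).filter
          (fun u : ℕ => legendreSym p u = ε * legendreSym p v), x ^ u := by
  obtain ⟨v', hvv', hv'cop, hHsum, hlegmul⟩ := exists_inv (w := w) hv
  have hv'v : v' * v % p ^ 2 = 1 := by rwa [mul_comm] at hvv'
  have hl2 : l + Hquot p w v + Hquot p w v' = l := by rw [add_assoc, hHsum, add_zero]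
  have hε2 : ε * legendreSym p v * legendreSym p v' = ε := by
    rw [mul_assoc, hlegmul, mul_one]
  refine Finset.sum_nbij' (fun u => u * v % p ^ 2) (fun u => u * v' % p ^ 2) ?_ ?_ ?_ ?_ ?_
  · intro a ha; exact mem_DsetF_shift hv ha
  · intro a ha
    have := mem_DsetF_shift (l := l + Hquot p w v) (ε := ε * legendreSym p v) hv'cop ha
    rwa [hl2, hε2] at this
  · intro a ha; exact inv_cancel (mem_Dset_iff.mp (Finset.mem_filter.mp ha).1).1 hvv'
  · intro a ha; exact inv_cancel (mem_Dset_iff.mp (Finset.mem_filter.mp ha).1).1 hv'v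
  · intro a ha; exact (pow_mod_cycle hx _).symm

lemma Nset_eq_filter (l : ZMod p) :
    Nset p w l = (Dset p w l).filter (fun u : ℕ => legendreSym p u = -1) := rfl

lemma Qset_eq_filter (l : ZMod p) :
    Qset p w l = (Dset p w l).filter (fun u : ℕ => legendreSym p u = 1) := rfl

lemma sum_Nset_shift_pos {x : AlgebraicClosure (ZMod 2)} (hx : x ^ p ^ 2 = 1)
    {v : ℕ} (hv : Nat.Coprime v p) (hleg : legendreSym p v = 1) (l : ZMod p) :
    ∑ u ∈ Nset p w l, x ^ (u * v) = ∑ u ∈ Nset p w (l + Hquot p w v), x ^ u := by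
  have h := sum_DsetF_shift (w := w) hx hv l (-1)
  rw [hleg, mul_one] at h
  rw [Nset_eq_filter, Nset_eq_filter]
  exact h

lemma sum_Nset_shift_neg {x : AlgebraicClosure (ZMod 2)} (hx : x ^ p ^ 2 = 1)
    {v : ℕ} (hv : Nat.Coprime v p) (hleg : legendreSym p v = -1) (l : ZMod p) :
    ∑ u ∈ Nset p w l, x ^ (u * v) = ∑ u ∈ Qset p w (l + Hquot p w v), x ^ u := by
  have h := sum_DsetF_shift (w := w) hx hv l (-1)
  rw [hleg] at h
  norm_num at h
  rw [Nset_eq_filter, Qset_eq_filter]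
  exact h

end Aux4
section Aux5

variable {p : ℕ} [hp : Fact p.Prime] {w : ℕ}

/-- The shifted/twisted version of `GoddEval`. -/
def Tsum (p : ℕ) [Fact p.Prime] (w : ℕ) (x : AlgebraicClosure (ZMod 2)) (h : ZMod p) (s : ℤ) :
    AlgebraicClosure (ZMod 2) :=
  (∑ l ∈ QNR p, ∑ u ∈ Dset p w ((l : ZMod p) + h), x ^ u)
    + ∑ l ∈ Finset.Ico 1 p,
        ∑ u ∈ (if s = 1 then Nset p w ((l : ZMod p) + h) else Qset p w ((l : ZMod p) + h)), x ^ u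

lemma Tsum_zero_one (x : AlgebraicClosure (ZMod 2)) :
    Tsum p w x 0 1 = GoddEval p w x := by
  simp [Tsum, GoddEval]

lemma Godd_subst {x : AlgebraicClosure (ZMod 2)} (hx : x ^ p ^ 2 = 1)
    {v : ℕ} (hv : Nat.Coprime v p) :
    GoddEval p w (x ^ v) = Tsum p w x (Hquot p w v) (legendreSym p v) := by
  have hpowpow : ∀ u : ℕ, (x ^ v) ^ u = x ^ (u * v) := fun u => by
    rw [← pow_mul, mul_comm]
  rw [GoddEval, Tsum]
  congr 1
  · refine Finset.sum_congr rfl fun l _ => ?_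
    calc ∑ u ∈ Dset p w (l : ZMod p), (x ^ v) ^ u
        = ∑ u ∈ Dset p w (l : ZMod p), x ^ (u * v) := by
          exact Finset.sum_congr rfl fun u _ => hpowpow u
      _ = ∑ u ∈ Dset p w ((l : ZMod p) + Hquot p w v), x ^ u := sum_Dset_shift hx hv _
  · refine Finset.sum_congr rfl fun l _ => ?_
    have h1 : ∑ u ∈ Nset p w (l : ZMod p), (x ^ v) ^ u
        = ∑ u ∈ Nset p w (l : ZMod p), x ^ (u * v) :=
      Finset.sum_congr rfl fun u _ => hpowpow u
    rcases leg_unit hv with hleg | hleg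
    · rw [h1, if_pos hleg, sum_Nset_shift_pos hx hv hleg]
    · rw [h1, if_neg (by rw [hleg]; norm_num), sum_Nset_shift_neg hx hv hleg]

lemma Godd_sq (x : AlgebraicClosure (ZMod 2)) :
    GoddEval p w (x ^ 2) = (GoddEval p w x) ^ 2 := by
  have key : ∀ (s : Finset ℕ) (f : ℕ → Finset ℕ),
      (∑ l ∈ s, ∑ u ∈ f l, x ^ u) ^ 2 = ∑ l ∈ s, ∑ u ∈ f l, (x ^ 2) ^ u := by
    intro s f
    calc (∑ l ∈ s, ∑ u ∈ f l, x ^ u) ^ 2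
        = frobenius (AlgebraicClosure (ZMod 2)) 2 (∑ l ∈ s, ∑ u ∈ f l, x ^ u) :=
          (frobenius_def _ _).symm
      _ = ∑ l ∈ s, ∑ u ∈ f l, frobenius (AlgebraicClosure (ZMod 2)) 2 (x ^ u) := by
          rw [map_sum]
          exact Finset.sum_congr rfl fun l _ => map_sum _ _ _
      _ = ∑ l ∈ s, ∑ u ∈ f l, (x ^ 2) ^ u := by
          refine Finset.sum_congr rfl fun l _ => Finset.sum_congr rfl fun u _ => ?_
          rw [frobenius_def, ← pow_mul, ← pow_mul, mul_comm]
  rw [GoddEval, GoddEval, add_pow_char, key, key]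

lemma Godd_pow2 (x : AlgebraicClosure (ZMod 2)) (j : ℕ) :
    GoddEval p w (x ^ 2 ^ j) = (GoddEval p w x) ^ 2 ^ j := by
  induction j with
  | zero => simp
  | succ j ih =>
      have h1 : x ^ 2 ^ (j + 1) = (x ^ 2 ^ j) ^ 2 := by
        rw [← pow_mul, pow_succ]
      rw [h1, Godd_sq, ih, ← pow_mul, ← pow_succ]

end Aux5
section Aux6

variable {p : ℕ} [hp : Fact p.Prime] {w : ℕ}

lemma two_coprime (hodd : p ≠ 2) : Nat.Coprime 2 p :=
  coprime_of_not_dvd fun h => hodd ((Nat.prime_dvd_prime_iff_eq hp.out Nat.prime_two).mp h)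

lemma Tsum_zero_of_zero {x : AlgebraicClosure (ZMod 2)} (hx : x ^ p ^ 2 = 1)
    (hzero : GoddEval p w x = 0) (hodd : p ≠ 2) (j : ℕ) :
    Tsum p w x ((j : ZMod p) * Hquot p w 2) ((legendreSym p 2) ^ j) = 0 := by
  have h2cop : Nat.Coprime 2 p := two_coprime hodd
  have h1 := Godd_subst (w := w) hx (Nat.Coprime.pow_left j h2cop)
  rw [Hquot_pow h2cop w j, leg_pow_nat 2 j] at h1
  rw [show (((2:ℕ) : ℤ)) = (2:ℤ) by norm_num] at h1
  rw [← h1, Godd_pow2, hzero, zero_pow (by positivity)]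

lemma Tsum_all_zero_Q {x : AlgebraicClosure (ZMod 2)} (hx : x ^ p ^ 2 = 1)
    (hzero : GoddEval p w x = 0) (hodd : p ≠ 2) (hH2 : Hquot p w 2 ≠ 0)
    (hleg2 : legendreSym p 2 = 1) (h : ZMod p) : Tsum p w x h 1 = 0 := by
  have hthis := Tsum_zero_of_zero hx hzero hodd (h * (Hquot p w 2)⁻¹).val
  have hcast : (((h * (Hquot p w 2)⁻¹).val : ℕ) : ZMod p) = h * (Hquot p w 2)⁻¹ :=
    ZMod.natCast_rightInverse _
  rw [hleg2, one_pow, hcast, mul_assoc, inv_mul_cancel₀ hH2, mul_one] at hthis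
  exact hthis

lemma Tsum_all_zero_N {x : AlgebraicClosure (ZMod 2)} (hx : x ^ p ^ 2 = 1)
    (hzero : GoddEval p w x = 0) (hodd : p ≠ 2) (hH2 : Hquot p w 2 ≠ 0)
    (hleg2 : legendreSym p 2 = -1) (h : ZMod p) (ε : ℤ) (hε : ε = 1 ∨ ε = -1) :
    Tsum p w x h ε = 0 := by
  have hpodd : Odd p := hp.out.odd_of_ne_two hodd
  obtain ⟨j, hj1, hj2⟩ : ∃ j : ℕ, ((j : ZMod p) * Hquot p w 2 = h) ∧ ((-1 : ℤ) ^ j = ε) := by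
    set j1 := (h * (Hquot p w 2)⁻¹).val with hj1def
    have hcast : ((j1 : ℕ) : ZMod p) = h * (Hquot p w 2)⁻¹ := ZMod.natCast_rightInverse _
    have hcancel : (h * (Hquot p w 2)⁻¹) * Hquot p w 2 = h := by
      rw [mul_assoc, inv_mul_cancel₀ hH2, mul_one]
    by_cases hpar : (-1 : ℤ) ^ j1 = ε
    · exact ⟨j1, by rw [hcast, hcancel], hpar⟩
    · refine ⟨j1 + p, ?_, ?_⟩
      · rw [Nat.cast_add, ZMod.natCast_self, add_zero, hcast, hcancel]
      · rw [pow_add, hpodd.neg_one_pow]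
        rcases Nat.even_or_odd j1 with hpar2 | hpar2
        · rw [hpar2.neg_one_pow] at hpar ⊢
          rcases hε with h' | h' <;> simp_all
        · rw [hpar2.neg_one_pow] at hpar ⊢
          rcases hε with h' | h' <;> simp_all
  have hthis := Tsum_zero_of_zero hx hzero hodd j
  rwa [hleg2, hj2, hj1] at hthis

lemma leg_inv_eq {v v' : ℕ} (hv : Nat.Coprime v p) (hv' : Nat.Coprime v' p)
    (h : legendreSym p v * legendreSym p v' = 1) :
    legendreSym p v' = legendreSym p v := by
  rcases leg_unit hv with h1 | h1 <;> rcases leg_unit hv' with h2 | h2 <;>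
    rw [h1, h2] at h ⊢ <;> revert h <;> norm_num

lemma Godd_zero_propagate {β : AlgebraicClosure (ZMod 2)} (hβpow : β ^ p ^ 2 = 1)
    {n m : ℕ} (hn : n.Coprime p) (hm : m.Coprime p)
    (hT : ∀ hh : ZMod p, Tsum p w (β ^ n) hh (legendreSym p m * legendreSym p n) = 0) :
    GoddEval p w (β ^ m) = 0 := by
  obtain ⟨n', hnn', hn'cop, _, hlegmul⟩ := exists_inv (w := w) hn
  set v := m * n' % p ^ 2 with hv
  have hvcop : v.Coprime p := coprime_mod_sq (coprime_mul hm hn'cop)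
  have hxn : (β ^ n) ^ p ^ 2 = 1 := by rw [← pow_mul, mul_comm, pow_mul, hβpow, one_pow]
  have hsub := Godd_subst (w := w) (x := β ^ n) hxn hvcop
  have hexp : n * v % p ^ 2 = m % p ^ 2 := by
    calc n * (m * n' % p ^ 2) % p ^ 2
        = m * n' % p ^ 2 * n % p ^ 2 := by rw [mul_comm]
      _ = m * n' * n % p ^ 2 := Nat.mod_mul_mod _ _ _
      _ = n * n' * m % p ^ 2 := by ring_nf
      _ = n * n' % p ^ 2 * m % p ^ 2 := (Nat.mod_mul_mod _ _ _).symm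
      _ = m % p ^ 2 := by rw [hnn', one_mul]
  have hBm : (β ^ n) ^ v = β ^ m := by
    rw [← pow_mul, ← pow_mod_cycle hβpow (n * v), hexp, pow_mod_cycle hβpow]
  have hlegv : legendreSym p v = legendreSym p m * legendreSym p n := by
    rw [hv, leg_mod_sq, leg_mul_nat, leg_inv_eq hn hn'cop hlegmul]
  rw [← hBm, hsub, hlegv]
  exact hT _

end Aux6
section Aux7

open Polynomial

variable {p : ℕ} [hp : Fact p.Prime] {w : ℕ}

/-- The polynomial `G^odd` over `F₂`. -/
def Gpoly (p : ℕ) [Fact p.Prime] (w : ℕ) : Polynomial (ZMod 2) :=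
  (∑ l ∈ QNR p, ∑ u ∈ Dset p w (l : ZMod p), Polynomial.X ^ u)
    + ∑ l ∈ Finset.Ico 1 p, ∑ u ∈ Nset p w (l : ZMod p), Polynomial.X ^ u

lemma Gpoly_aeval (x : AlgebraicClosure (ZMod 2)) :
    Polynomial.aeval x (Gpoly p w) = GoddEval p w x := by
  simp [Gpoly, GoddEval, map_sum, map_add, map_pow, Polynomial.aeval_X]

lemma Gpoly_coeff (m : ℕ) :
    (Gpoly p w).coeff m
      = (∑ l ∈ QNR p, if m ∈ Dset p w (l : ZMod p) then 1 else 0)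
        + ∑ l ∈ Finset.Ico 1 p, if m ∈ Nset p w (l : ZMod p) then 1 else 0 := by
  rw [Gpoly, Polynomial.coeff_add, Polynomial.finset_sum_coeff, Polynomial.finset_sum_coeff]
  congr 1 <;> refine Finset.sum_congr rfl fun l _ => ?_ <;>
    rw [Polynomial.finset_sum_coeff] <;>
    simp only [Polynomial.coeff_X_pow] <;>
    rw [Finset.sum_ite_eq]

lemma Gpoly_natDegree_le : (Gpoly p w).natDegree ≤ p ^ 2 - 1 := by
  have h1 : ∀ (S : Finset ℕ) (hS : ∀ u ∈ S, u < p ^ 2),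
      (∑ u ∈ S, (Polynomial.X : Polynomial (ZMod 2)) ^ u).natDegree ≤ p ^ 2 - 1 := by
    intro S hS
    refine Polynomial.natDegree_sum_le_of_forall_le _ _ fun u hu => ?_
    rw [Polynomial.natDegree_X_pow]
    have := hS u hu
    have := sq_one_lt (p := p)
    omega
  refine le_trans (Polynomial.natDegree_add_le _ _) (max_le ?_ ?_) <;>
    refine Polynomial.natDegree_sum_le_of_forall_le _ _ fun l _ => h1 _ fun u hu => ?_
  · exact (mem_Dset_iff.mp hu).1
  · exact (mem_Dset_iff.mp (Finset.mem_filter.mp hu).1).1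

lemma cast_Ico_ne_zero {l : ℕ} (hl : l ∈ Finset.Ico 1 p) : (l : ZMod p) ≠ 0 := by
  rw [Finset.mem_Ico] at hl
  intro h
  rw [ZMod.natCast_eq_zero_iff] at h
  have := Nat.le_of_dvd (by omega) h
  omega

lemma Gpoly_coeff_one : (Gpoly p w).coeff 1 = 0 := by
  rw [Gpoly_coeff]
  rw [Finset.sum_eq_zero, Finset.sum_eq_zero, add_zero]
  · intro l hl
    rw [Finset.mem_Ico] at hl
    rw [if_neg]
    intro hmem
    have := (Finset.mem_filter.mp hmem).2
    rw [Nat.cast_one] at this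
    have h1 := legendreSym.at_one p
    omega
  · intro l hl
    rw [if_neg]
    intro hmem
    have h3 := (mem_Dset_iff.mp hmem).2.2
    rw [Hquot_one] at h3
    exact cast_Ico_ne_zero (Finset.mem_filter.mp hl |>.1) h3.symm

lemma Gpoly_dvd {β : AlgebraicClosure (ZMod 2)} (hβ : IsPrimitiveRoot β (p ^ 2))
    (hall : ∀ m, m < p ^ 2 → m.Coprime p → GoddEval p w (β ^ m) = 0) :
    Polynomial.cyclotomic (p ^ 2) (ZMod 2) ∣ Gpoly p w := by
  set K := AlgebraicClosure (ZMod 2)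
  have hpos : 0 < p ^ 2 := by have := hp.out.pos; positivity
  have hprim : ∀ μ ∈ primitiveRoots (p ^ 2) K,
      (Polynomial.X - Polynomial.C μ) ∣ (Gpoly p w).map (algebraMap (ZMod 2) K) := by
    intro μ hμ
    have hμprim : IsPrimitiveRoot μ (p ^ 2) := isPrimitiveRoot_of_mem_primitiveRoots hμ
    obtain ⟨i, hi_lt, hi_eq⟩ := hβ.eq_pow_of_pow_eq_one hμprim.pow_eq_one
    have hicop : i.Coprime (p ^ 2) := (hβ.pow_iff_coprime hpos i).mp (hi_eq ▸ hμprim)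
    have hicp : i.Coprime p := Nat.Coprime.coprime_dvd_right (dvd_pow_self p two_ne_zero) hicop
    rw [Polynomial.dvd_iff_isRoot, Polynomial.IsRoot, Polynomial.eval_map,
      ← Polynomial.aeval_def, Gpoly_aeval, ← hi_eq]
    exact hall i hi_lt hicp
  have hpair : (↑(primitiveRoots (p ^ 2) K) : Set K).Pairwise
      (Function.onFun IsCoprime fun μ => Polynomial.X - Polynomial.C μ) :=
    fun a _ b _ hab => (Polynomial.pairwise_coprime_X_sub_C Function.injective_id) hab
  have hproddvd := Finset.prod_dvd_of_coprime hpair hprim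
  rw [← Polynomial.cyclotomic_eq_prod_X_sub_primitiveRoots hβ,
    ← Polynomial.map_cyclotomic (p ^ 2) (algebraMap (ZMod 2) K)] at hproddvd
  exact (Polynomial.map_dvd_map' (algebraMap (ZMod 2) K)).mp hproddvd

end Aux7
section Aux8

open Polynomial

variable {p : ℕ} [hp : Fact p.Prime] {w : ℕ}

lemma Godd_not_all_zero {β : AlgebraicClosure (ZMod 2)} (hβ : IsPrimitiveRoot β (p ^ 2))
    (hodd : p ≠ 2) (hw1 : 1 ≤ w) (hw2 : w ≤ p - 1) :
    ¬ ∀ m, m < p ^ 2 → m.Coprime p → GoddEval p w (β ^ m) = 0 := by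
  intro hall
  have hp1 : 1 < p := hp.out.one_lt
  haveI : NeZero p := ⟨hp.out.ne_zero⟩
  obtain ⟨c, hc⟩ : ∃ c : ZMod p, ¬ IsSquare c :=
    FiniteField.exists_nonsquare (by rw [ZMod.ringChar_zmod_n]; exact hodd)
  have hc0 : c ≠ 0 := fun h => hc (h ▸ ⟨0, by ring⟩)
  have hwcast : (w : ZMod p) ≠ 0 := by
    intro h
    rw [ZMod.natCast_eq_zero_iff] at h
    have := Nat.le_of_dvd (by omega) h
    omega
  obtain ⟨k, hkp, hck⟩ : ∃ k : ℕ, k < p ∧ (w : ZMod p) * (k : ZMod p) = c :=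
    ⟨((w : ZMod p)⁻¹ * c).val, ZMod.val_lt _, by
      rw [ZMod.natCast_rightInverse _, ← mul_assoc, mul_inv_cancel₀ hwcast, one_mul]⟩
  have hcomm : p * k = k * p := Nat.mul_comm p k
  have hu₁lt : 1 + k * p < p ^ 2 := by rw [pow_two]; nlinarith
  have hu₁H : Hquot p w (1 + k * p) = c := by rw [Hquot_one_add_mul hkp, hck]
  have hu₁leg : legendreSym p (1 + k * p : ℕ) = 1 := leg_one_add_mul k
  have hu₁cop : Nat.Coprime (1 + k * p) p := by
    apply coprime_of_not_dvd
    intro hdvd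
    have h3 : p ∣ k * p := Dvd.intro_left k rfl
    have h4 := Nat.dvd_sub hdvd h3
    rw [Nat.add_sub_cancel] at h4
    have := Nat.eq_one_of_dvd_one h4
    omega
  have hcval : legendreSym p (c.val) = -1 := by
    rw [legendreSym.eq_neg_one_iff']
    rwa [ZMod.natCast_rightInverse _]
  have hcvalmem : c.val ∈ QNR p := by
    rw [QNR, Finset.mem_filter, Finset.mem_Ico]
    have h1 : c.val < p := ZMod.val_lt _
    have h2 : c.val ≠ 0 := fun h => hc0 (by rw [← ZMod.natCast_rightInverse c, h, Nat.cast_zero])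
    exact ⟨⟨by omega, h1⟩, hcval⟩
  -- coefficient of X^(1+k*p) is 1
  have hcoeffu₁ : (Gpoly p w).coeff (1 + k * p) = 1 := by
    rw [Gpoly_coeff]
    have h2 : (∑ l ∈ Finset.Ico 1 p,
        if (1 + k * p) ∈ Nset p w (l : ZMod p) then (1 : ZMod 2) else 0) = 0 := by
      refine Finset.sum_eq_zero fun l hl => ?_
      rw [if_neg]
      intro hmem
      have := (Finset.mem_filter.mp hmem).2
      omega
    have h1 : (∑ l ∈ QNR p,
        if (1 + k * p) ∈ Dset p w (l : ZMod p) then (1 : ZMod 2) else 0) = 1 := by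
      rw [Finset.sum_eq_single c.val]
      · rw [if_pos (mem_Dset_iff.mpr ⟨hu₁lt, hu₁cop, by
          rw [hu₁H, ZMod.natCast_rightInverse _]⟩)]
      · intro l hl hlne
        rw [if_neg]
        intro hmem
        have h3 := (mem_Dset_iff.mp hmem).2.2
        rw [hu₁H] at h3
        have hlp : l < p := (Finset.mem_Ico.mp (Finset.mem_filter.mp hl).1).2
        exact hlne (by rw [h3, ZMod.val_cast_of_lt hlp])
      · intro habs; exact absurd hcvalmem habs
    rw [h1, h2, add_zero]
  -- divisibility and factorization
  obtain ⟨g, hg⟩ := Gpoly_dvd hβ hall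
  have hPne : Gpoly p w ≠ 0 := fun h => by
    rw [h, Polynomial.coeff_zero] at hcoeffu₁; exact one_ne_zero hcoeffu₁.symm
  have hgne : g ≠ 0 := fun h => hPne (by rw [hg, h, mul_zero])
  have hcycdeg : (Polynomial.cyclotomic (p ^ 2) (ZMod 2)).natDegree = p ^ 2 - p := by
    rw [Polynomial.natDegree_cyclotomic, Nat.totient_prime_pow hp.out (by norm_num : 0 < 2)]
    rw [show (2 - 1 : ℕ) = 1 from rfl, pow_one, ← Nat.pred_eq_sub_one, Nat.mul_pred, ← pow_two]
  have hmul := Polynomial.natDegree_mul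
    (Polynomial.cyclotomic_ne_zero (p ^ 2) (R := ZMod 2)) hgne
  rw [← hg, hcycdeg] at hmul
  have hgdeg : g.natDegree ≤ p - 1 := by
    have hPdeg := Gpoly_natDegree_le (p := p) (w := w)
    have hsq : 1 < p ^ 2 := sq_one_lt
    have hple : p ≤ p ^ 2 := by nlinarith
    omega
  -- coefficients via the factorization
  have hco : ∀ m : ℕ, (Gpoly p w).coeff m
      = ∑ i ∈ Finset.range p, if p * i ≤ m then g.coeff (m - p * i) else 0 := by
    intro m
    have hcyc : Polynomial.cyclotomic (p ^ 2) (ZMod 2)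
        = ∑ i ∈ Finset.range p, (Polynomial.X : Polynomial (ZMod 2)) ^ (p * i) := by
      have hgeo := Polynomial.cyclotomic_prime_pow_eq_geom_sum (R := ZMod 2) (p := p) (n := 1)
        hp.out
      rw [show p ^ (1 + 1) = p ^ 2 from rfl] at hgeo
      rw [hgeo]
      refine Finset.sum_congr rfl fun i _ => ?_
      rw [← pow_mul, pow_one]
    rw [hg, hcyc, Finset.sum_mul, Polynomial.finset_sum_coeff]
    refine Finset.sum_congr rfl fun i _ => ?_
    rw [mul_comm ((Polynomial.X : Polynomial (ZMod 2)) ^ (p * i)) g,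
      Polynomial.coeff_mul_X_pow']
  -- coeff at 1 equals g.coeff 1
  have e1 : (Gpoly p w).coeff 1 = g.coeff 1 := by
    rw [hco, Finset.sum_eq_single 0]
    · norm_num
    · intro i hi hine
      rw [if_neg]
      have : p ≤ p * i := Nat.le_mul_of_pos_right p (by omega)
      omega
    · intro habs
      exact absurd (Finset.mem_range.mpr (by omega)) habs
  -- coeff at 1 + k*p equals g.coeff 1
  have e2 : (Gpoly p w).coeff (1 + k * p) = g.coeff 1 := by
    rw [hco, Finset.sum_eq_single k]
    · rw [if_pos (by omega)]
      congr 1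
      omega
    · intro i hi hine
      rcases Nat.lt_or_ge i k with hik | hik
      · have h1 : p * i + p * (k - i) = p * k := by
          rw [← Nat.mul_add]
          congr 1
          omega
        have h2 : p ≤ p * (k - i) := Nat.le_mul_of_pos_right p (by omega)
        rw [if_pos (by omega)]
        apply Polynomial.coeff_eq_zero_of_natDegree_lt
        omega
      · have hik' : k < i := by omega
        have h3 : p * (k + 1) ≤ p * i := Nat.mul_le_mul_left p (by omega)
        have h4 : p * (k + 1) = p * k + p := by rw [Nat.mul_add, Nat.mul_one]
        rw [if_neg (by omega)]
    · intro habs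
      exact absurd (Finset.mem_range.mpr hkp) habs
  rw [Gpoly_coeff_one] at e1
  rw [hcoeffu₁, ← e1] at e2
  exact one_ne_zero e2

end Aux8
section Aux9

variable {p : ℕ} [hp : Fact p.Prime] {w : ℕ}

lemma card_coprime_filter :
    ((Finset.range (p ^ 2)).filter (fun m => Nat.Coprime m p)).card = p ^ 2 - p := by
  have hfe : (Finset.range (p ^ 2)).filter (fun m => Nat.Coprime m p)
      = (Finset.range (p ^ 2)).filter (fun m => Nat.Coprime (p ^ 2) m) := by
    refine Finset.filter_congr fun m _ => ?_
    rw [Nat.coprime_pow_left_iff (by norm_num : 0 < 2), Nat.coprime_comm]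
  rw [hfe]
  have htot : ((Finset.range (p ^ 2)).filter (fun m => Nat.Coprime (p ^ 2) m)).card
      = Nat.totient (p ^ 2) := rfl
  rw [htot, Nat.totient_prime_pow hp.out (by norm_num : 0 < 2), pow_one, ← Nat.pred_eq_sub_one,
    Nat.mul_pred, ← pow_two]

lemma card_leg_filters_eq (hodd : p ≠ 2) :
    ((Finset.range (p ^ 2)).filter (fun m => Nat.Coprime m p ∧ legendreSym p m = 1)).card
      = ((Finset.range (p ^ 2)).filter
          (fun m => Nat.Coprime m p ∧ legendreSym p m = -1)).card := by
  haveI : NeZero p := ⟨hp.out.ne_zero⟩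
  obtain ⟨c, hc⟩ : ∃ c : ZMod p, ¬ IsSquare c :=
    FiniteField.exists_nonsquare (by rw [ZMod.ringChar_zmod_n]; exact hodd)
  have hc0 : c ≠ 0 := fun h => hc (h ▸ ⟨0, by ring⟩)
  have hcval : legendreSym p (c.val) = -1 := by
    rw [legendreSym.eq_neg_one_iff']
    rwa [ZMod.natCast_rightInverse _]
  have hccop : Nat.Coprime (c.val) p := by
    apply coprime_of_not_dvd
    intro h
    rw [← ZMod.natCast_eq_zero_iff, ZMod.natCast_rightInverse _] at h
    exact hc0 h
  obtain ⟨c', hcc', hc'cop, _, hlegmul⟩ := exists_inv (w := 1) hccop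
  have hc'c : c' * c.val % p ^ 2 = 1 := by rwa [mul_comm] at hcc'
  have hlegc' : legendreSym p c' = -1 := by
    rw [leg_inv_eq hccop hc'cop hlegmul, hcval]
  have hsqpos : 0 < p ^ 2 := by have := hp.out.pos; positivity
  refine Finset.card_nbij' (fun m => m * c.val % p ^ 2) (fun m => m * c' % p ^ 2) ?_ ?_ ?_ ?_
  · intro a ha
    simp only [Finset.mem_coe, Finset.mem_filter, Finset.mem_range] at ha ⊢
    obtain ⟨h1, h2, h3⟩ := ha
    refine ⟨Nat.mod_lt _ hsqpos, coprime_mod_sq (coprime_mul h2 hccop), ?_⟩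
    rw [leg_mod_sq, leg_mul_nat, h3, hcval, one_mul]
  · intro a ha
    simp only [Finset.mem_coe, Finset.mem_filter, Finset.mem_range] at ha ⊢
    obtain ⟨h1, h2, h3⟩ := ha
    refine ⟨Nat.mod_lt _ hsqpos, coprime_mod_sq (coprime_mul h2 hc'cop), ?_⟩
    rw [leg_mod_sq, leg_mul_nat, h3, hlegc']
    norm_num
  · intro a ha
    simp only [Finset.mem_coe, Finset.mem_filter, Finset.mem_range] at ha
    exact inv_cancel ha.1 hcc'
  · intro a ha
    simp only [Finset.mem_coe, Finset.mem_filter, Finset.mem_range] at ha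
    exact inv_cancel ha.1 hc'c

lemma card_leg_filter_half (hodd : p ≠ 2) (ε : ℤ) (hε : ε = 1 ∨ ε = -1) :
    ((Finset.range (p ^ 2)).filter (fun m => Nat.Coprime m p ∧ legendreSym p m = ε)).card
      = (p ^ 2 - p) / 2 := by
  set A := (Finset.range (p ^ 2)).filter (fun m => Nat.Coprime m p ∧ legendreSym p m = 1)
    with hA
  set B := (Finset.range (p ^ 2)).filter (fun m => Nat.Coprime m p ∧ legendreSym p m = -1)
    with hB
  have hdisj : Disjoint A B := by
    rw [Finset.disjoint_filter]
    rintro x _ ⟨_, h1⟩ ⟨_, h2⟩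
    rw [h1] at h2
    norm_num at h2
  have hunion : A ∪ B = (Finset.range (p ^ 2)).filter (fun m => Nat.Coprime m p) := by
    rw [hA, hB, ← Finset.filter_or]
    refine Finset.filter_congr fun m hm => ?_
    constructor
    · rintro (⟨h1, _⟩ | ⟨h1, _⟩) <;> exact h1
    · intro h1
      rcases leg_unit h1 with h2 | h2
      · exact Or.inl ⟨h1, h2⟩
      · exact Or.inr ⟨h1, h2⟩
  have hcards : A.card + B.card = p ^ 2 - p := by
    rw [← Finset.card_union_of_disjoint hdisj, hunion, card_coprime_filter]
  have heq : A.card = B.card := card_leg_filters_eq hodd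
  rcases hε with rfl | rfl
  · show A.card = (p ^ 2 - p) / 2
    omega
  · show B.card = (p ^ 2 - p) / 2
    omega

end Aux9
/-- Lemma: zeros of `G^odd` at `β^n` with `n` in the unit group of `Z_{p²}`. -/
theorem GoddEval_zeros (p : ℕ) [hp : Fact p.Prime] (hodd : p ≠ 2)
    (w : ℕ) (hw1 : 1 ≤ w) (hw2 : w ≤ p - 1)
    (β : AlgebraicClosure (ZMod 2)) (hβ : IsPrimitiveRoot β (p ^ 2))
    (ℓ₀ : ℕ) (hℓ₀1 : 1 ≤ ℓ₀) (hℓ₀2 : ℓ₀ ≤ p - 1) :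
    (2 ∈ Qset p w (ℓ₀ : ZMod p) →
      ((Finset.range (p ^ 2)).filter
          (fun n => Nat.Coprime n p ∧ GoddEval p w (β ^ n) = 0)) = ∅ ∨
      ((Finset.range (p ^ 2)).filter
          (fun n => Nat.Coprime n p ∧ GoddEval p w (β ^ n) = 0)).card = (p ^ 2 - p) / 2) ∧
    (2 ∈ Nset p w (ℓ₀ : ZMod p) →
      ∀ n : ℕ, n < p ^ 2 → Nat.Coprime n p → GoddEval p w (β ^ n) ≠ 0) := by
  have hp1 : 1 < p := hp.out.one_lt
  have hβpow : β ^ p ^ 2 = 1 := hβ.pow_eq_one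
  have hl0ne : ((ℓ₀ : ZMod p)) ≠ 0 := by
    intro h
    rw [ZMod.natCast_eq_zero_iff] at h
    have := Nat.le_of_dvd (by omega) h
    omega
  have hxpow : ∀ n : ℕ, (β ^ n) ^ p ^ 2 = 1 := fun n => by
    rw [← pow_mul, mul_comm, pow_mul, hβpow, one_pow]
  constructor
  · intro h2Q
    rw [Qset, Finset.mem_filter] at h2Q
    obtain ⟨h2D, hleg2⟩ := h2Q
    obtain ⟨-, h2cop', hH2⟩ := mem_Dset_iff.mp h2D
    have hH2ne : Hquot p w 2 ≠ 0 := by rw [hH2]; exact hl0ne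
    have hleg2' : legendreSym p 2 = 1 := by
      rwa [show (((2 : ℕ) : ℤ)) = (2 : ℤ) by norm_num] at hleg2
    set S := (Finset.range (p ^ 2)).filter
      (fun n => Nat.Coprime n p ∧ GoddEval p w (β ^ n) = 0) with hS
    rcases Finset.eq_empty_or_nonempty S with hemp | ⟨n₀, hn₀⟩
    · exact Or.inl hemp
    right
    rw [hS, Finset.mem_filter, Finset.mem_range] at hn₀
    obtain ⟨hn₀lt, hn₀cop, hn₀zero⟩ := hn₀
    have hprop : ∀ n m : ℕ, n.Coprime p → m.Coprime p → GoddEval p w (β ^ n) = 0 →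
        legendreSym p m = legendreSym p n → GoddEval p w (β ^ m) = 0 := by
      intro n m hn hm hzero hlegm
      refine Godd_zero_propagate hβpow hn hm fun hh => ?_
      have hprod : legendreSym p m * legendreSym p n = 1 := by
        rcases leg_unit hn with h | h <;> rw [hlegm, h] <;> norm_num
      rw [hprod]
      exact Tsum_all_zero_Q (hxpow n) hzero hodd hH2ne hleg2' hh
    have hSeq : S = (Finset.range (p ^ 2)).filter
        (fun m => Nat.Coprime m p ∧ legendreSym p m = legendreSym p n₀) := by
      ext n
      simp only [hS, Finset.mem_filter, Finset.mem_range]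
      constructor
      · rintro ⟨hlt, hcop, hzero⟩
        refine ⟨hlt, hcop, ?_⟩
        by_contra hne
        refine Godd_not_all_zero hβ hodd hw1 hw2 fun m hmlt hmcop => ?_
        rcases leg_unit hmcop with hm | hm
        · rcases leg_unit hn₀cop with h0 | h0
          · exact hprop n₀ m hn₀cop hmcop hn₀zero (by rw [hm, h0])
          · have hn1 : legendreSym p n = 1 := by
              rcases leg_unit hcop with h | h
              · exact h
              · exact absurd (by rw [h, h0]) hne
            exact hprop n m hcop hmcop hzero (by rw [hm, hn1])
        · rcases leg_unit hn₀cop with h0 | h0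
          · have hn1 : legendreSym p n = -1 := by
              rcases leg_unit hcop with h | h
              · exact absurd (by rw [h, h0]) hne
              · exact h
            exact hprop n m hcop hmcop hzero (by rw [hm, hn1])
          · exact hprop n₀ m hn₀cop hmcop hn₀zero (by rw [hm, h0])
      · rintro ⟨hlt, hcop, hlegn⟩
        exact ⟨hlt, hcop, hprop n₀ n hn₀cop hcop hn₀zero hlegn⟩
    rw [hSeq]
    exact card_leg_filter_half hodd _ (leg_unit hn₀cop)
  · intro h2N n hnlt hncop hzero
    rw [Nset, Finset.mem_filter] at h2N
    obtain ⟨h2D, hleg2⟩ := h2N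
    obtain ⟨-, -, hH2⟩ := mem_Dset_iff.mp h2D
    have hH2ne : Hquot p w 2 ≠ 0 := by rw [hH2]; exact hl0ne
    have hleg2' : legendreSym p 2 = -1 := by
      rwa [show (((2 : ℕ) : ℤ)) = (2 : ℤ) by norm_num] at hleg2
    refine Godd_not_all_zero hβ hodd hw1 hw2 fun m hmlt hmcop => ?_
    refine Godd_zero_propagate hβpow hncop hmcop fun hh => ?_
    refine Tsum_all_zero_N (hxpow n) hzero hodd hH2ne hleg2' hh _ ?_
    rcases leg_unit hmcop with h1 | h1 <;> rcases leg_unit hncop with h2 | h2 <;>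
      rw [h1, h2] <;> norm_num
end
end
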